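/- arXiv:1805.11561 — 5 statements merged into one kernel-verified Lean document; each statement's English description precedes it below -/
import Mathlib

section
/- Suppose φ₀ and φ₁ are L^p-formal disintegrations of Banach spaces ℬ₀ and ℬ₁ respectively, and f : dom(φ₀) → dom(φ₁) is an isomorphism of φ₀ with φ₁ (an order isomorphism of the trees with respect to the prefix order such that ‖φ₁(f(ν))‖ = ‖φ₀(ν)‖ for all ν). Then there is a unique isometric isomorphism T : ℬ₀ → ℬ₁ with T(φ₀(ν)) = φ₁(f(ν)) for all ν ∈ dom(φ₀). -/
open scoped Classical

/-- `S` is a tree of finite sequences of naturals. -/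
def IsTree (S : Set (List ℕ)) : Prop :=
  S.Nonempty ∧ ∀ ν ∈ S, ∀ μ : List ℕ, μ <+: ν → μ ∈ S

/-- `φ` is summative on `S`: at each node with at least one child in `S`,
`φ` of the node is the (convergent) sum of `φ` over its children in `S`. -/
def Summative {B : Type*} [NormedAddCommGroup B] (S : Set (List ℕ)) (φ : List ℕ → B) : Prop :=
  ∀ ν ∈ S, (∃ k : ℕ, ν ++ [k] ∈ S) →
    HasSum (fun k : {k : ℕ // ν ++ [k] ∈ S} => φ (ν ++ [k.1])) (φ ν)

/-- `φ` is formally `L^p`-separating: values at pairwise incomparable nodes are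
`L^p`-formally disjointly supported. -/
def FormallySeparating {𝕜 B : Type*} [RCLike 𝕜] [NormedAddCommGroup B] [NormedSpace 𝕜 B]
    (p : ℝ) (S : Set (List ℕ)) (φ : List ℕ → B) : Prop :=
  ∀ (n : ℕ) (ν : Fin n → List ℕ), (∀ i, ν i ∈ S) →
    (∀ i j, i ≠ j → ¬ (ν i <+: ν j) ∧ ¬ (ν j <+: ν i)) →
    ∀ a : Fin n → 𝕜,
      ‖∑ i, a i • φ (ν i)‖ ^ p = ∑ i, ‖a i‖ ^ p * ‖φ (ν i)‖ ^ p

/-- `φ : S → B` is an `L^p`-formal disintegration of `B`. -/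
def IsFormalDisintegration (𝕜 : Type*) [RCLike 𝕜] {B : Type*} [NormedAddCommGroup B]
    [NormedSpace 𝕜 B] (p : ℝ) (S : Set (List ℕ)) (φ : List ℕ → B) : Prop :=
  IsTree S ∧ Summative S φ ∧ FormallySeparating (𝕜 := 𝕜) p S φ ∧
    (∀ ν ∈ S, φ ν ≠ 0) ∧
    (Submodule.span 𝕜 (φ '' S)).topologicalClosure = ⊤

namespace Stmt2Aux

/-- incomparability in the prefix order -/
def Incomp (μ ν : List ℕ) : Prop := ¬ μ <+: ν ∧ ¬ ν <+: μ

lemma not_incomp_self (μ : List ℕ) : ¬ Incomp μ μ := fun h => h.1 (List.prefix_refl μ)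

lemma incomp_symm {μ ν : List ℕ} (h : Incomp μ ν) : Incomp ν μ := ⟨h.2, h.1⟩

/-- incomparability propagates to extensions -/
lemma incomp_of_incomp_prefix {μ ν μ' ν' : List ℕ} (h : Incomp μ ν) (hμ : μ <+: μ') (hν : ν <+: ν') :
    Incomp μ' ν' := by
  constructor
  · intro hpre
    rcases List.prefix_or_prefix_of_prefix (hμ.trans hpre) hν with h1 | h1
    · exact h.1 h1
    · exact h.2 h1
  · intro hpre
    rcases List.prefix_or_prefix_of_prefix (hν.trans hpre) hμ with h1 | h1
    · exact h.2 h1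
    · exact h.1 h1

lemma incomp_append {μ : List ℕ} {k k' : ℕ} (h : k ≠ k') : Incomp (μ ++ [k]) (μ ++ [k']) := by
  constructor
  · intro hpre
    have hkk : k = k' := by simpa using hpre.eq_of_length_le (by simp)
    exact h hkk
  · intro hpre
    have hkk : k' = k := by simpa using hpre.eq_of_length_le (by simp)
    exact h hkk.symm

/-- a strict prefix extends by one step -/
lemma step_prefix {μ ν : List ℕ} (h : μ <+: ν) (hne : μ ≠ ν) :
    μ ++ [ν.getD μ.length 0] <+: ν := by
  obtain ⟨t, rfl⟩ := h
  rcases t with _ | ⟨k, t⟩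
  · simp at hne
  · have : (μ ++ k :: t).getD μ.length 0 = k := by
      rw [List.getD_eq_getElem?_getD, List.getElem?_append_right (le_refl _)]
      simp
    rw [this]
    exact ⟨t, by simp⟩

lemma getD_append (μ : List ℕ) (k : ℕ) : (μ ++ [k]).getD μ.length 0 = k := by
  rw [List.getD_eq_getElem?_getD, List.getElem?_append_right (le_refl _)]
  simp

lemma prefix_dropLast_iff {μ ν : List ℕ} (hν : ν ≠ []) :
    μ <+: ν.dropLast ↔ (μ <+: ν ∧ μ ≠ ν) := by
  obtain ⟨l, a, rfl⟩ := ν.eq_nil_or_concat.resolve_left hν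
  rw [List.concat_eq_append, List.dropLast_concat]
  constructor
  · intro h
    refine ⟨h.trans ⟨[a], rfl⟩, ?_⟩
    rintro rfl
    have := h.length_le
    simp at this
  · rintro ⟨h1, h2⟩
    have hlen : μ.length ≤ l.length := by
      by_contra hl
      push_neg at hl
      exact h2 (h1.eq_of_length_le (by simpa using hl))
    rcases List.prefix_or_prefix_of_prefix h1 (⟨[a], rfl⟩ : l <+: l ++ [a]) with h | h
    · exact h
    · cases h.eq_of_length_le hlen
      exact List.prefix_refl _
  
lemma dropLast_append_getLastD {ν : List ℕ} (hν : ν ≠ []) :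
    ν.dropLast ++ [ν.getLastD 0] = ν := by
  obtain ⟨l, a, rfl⟩ := ν.eq_nil_or_concat.resolve_left hν
  rw [List.concat_eq_append, List.dropLast_concat, List.getLastD_concat]

section Part2
variable {𝕜 B : Type*} [RCLike 𝕜] [NormedAddCommGroup B] [NormedSpace 𝕜 B]

/-- finite antichain sums with unit coefficients from `D` -/
def PreSupp (D : Set (List ℕ)) (φ : List ℕ → B) : Set B :=
  {x | ∃ A : Finset (List ℕ), ↑A ⊆ D ∧ (∀ μ ∈ A, ∀ ν ∈ A, μ ≠ ν → Incomp μ ν) ∧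
    x = ∑ μ ∈ A, φ μ}

/-- Finset version of formal separation -/
lemma FS' {p : ℝ} {S : Set (List ℕ)} {φ : List ℕ → B}
    (hφ : FormallySeparating (𝕜 := 𝕜) p S φ)
    (A : Finset (List ℕ)) (hAS : ↑A ⊆ S)
    (hA : ∀ μ ∈ A, ∀ ν ∈ A, μ ≠ ν → Incomp μ ν) (a : List ℕ → 𝕜) :
    ‖∑ μ ∈ A, a μ • φ μ‖ ^ p = ∑ μ ∈ A, ‖a μ‖ ^ p * ‖φ μ‖ ^ p := by
  classical
  set e := A.equivFin with he
  set ν : Fin A.card → List ℕ := fun i => (e.symm i : List ℕ) with hν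
  have hmem : ∀ i, ν i ∈ S := fun i => hAS (e.symm i).2
  have hinj : Function.Injective ν := fun i j hij => by
    have : e.symm i = e.symm j := Subtype.ext hij
    simpa using congrArg e this
  have hinc : ∀ i j, i ≠ j → ¬ (ν i <+: ν j) ∧ ¬ (ν j <+: ν i) := by
    intro i j hij
    exact hA _ (e.symm i).2 _ (e.symm j).2 (fun h => hij (hinj h))
  have key := hφ A.card ν hmem hinc (fun i => a (ν i))
  have h1 : ∑ i, a (ν i) • φ (ν i) = ∑ μ ∈ A, a μ • φ μ := by
    rw [← Finset.sum_coe_sort A (fun μ => a μ • φ μ)]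
    exact (Equiv.sum_comp e.symm (fun x => a (x : List ℕ) • φ (x : List ℕ)))
  have h2 : ∑ i, ‖a (ν i)‖ ^ p * ‖φ (ν i)‖ ^ p = ∑ μ ∈ A, ‖a μ‖ ^ p * ‖φ μ‖ ^ p := by
    rw [← Finset.sum_coe_sort A (fun μ => ‖a μ‖ ^ p * ‖φ μ‖ ^ p)]
    exact (Equiv.sum_comp e.symm (fun x => ‖a (x : List ℕ)‖ ^ p * ‖φ (x : List ℕ)‖ ^ p))
  rw [h1, h2] at key
  exact key

/-- formal separation for limits of antichain sums over pairwise incomparable sets -/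
lemma C'' {p : ℝ} (hp : 1 ≤ p) {S : Set (List ℕ)} {φ : List ℕ → B}
    (hφ : FormallySeparating (𝕜 := 𝕜) p S φ)
    {ι : Type*} [Fintype ι] (D : ι → Set (List ℕ))
    (hDS : ∀ i, D i ⊆ S)
    (hD : ∀ i j, i ≠ j → ∀ μ ∈ D i, ∀ ν ∈ D j, Incomp μ ν)
    (v : ι → B) (hv : ∀ i, v i ∈ closure (PreSupp (D i) φ))
    (α : ι → 𝕜) :
    ‖∑ i, α i • v i‖ ^ p = ∑ i, ‖α i‖ ^ p * ‖v i‖ ^ p := by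
  classical
  have hp0 : (0:ℝ) ≤ p := le_trans zero_le_one hp
  -- the key finite computation
  have key : ∀ w : ι → B, w ∈ Set.pi Set.univ (fun i => PreSupp (D i) φ) →
      ‖∑ i, α i • w i‖ ^ p = ∑ i, ‖α i‖ ^ p * ‖w i‖ ^ p := by
    intro w hw
    choose A hAD hAinc hAsum using fun i => hw i (Set.mem_univ i)
    have hdisj : ∀ i j, i ≠ j → Disjoint (A i) (A j) := by
      intro i j hij
      rw [Finset.disjoint_left]
      intro μ hi hj
      exact not_incomp_self μ (hD i j hij μ (hAD i hi) μ (hAD j hj))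
    set U : Finset (List ℕ) := Finset.univ.biUnion A with hU
    have hAU : ∀ i, A i ⊆ U := fun i => Finset.subset_biUnion_of_mem A (Finset.mem_univ i)
    set c : List ℕ → 𝕜 := fun μ => ∑ i, if μ ∈ A i then α i else 0 with hc
    have hcval : ∀ i, ∀ μ ∈ A i, c μ = α i := by
      intro i μ hμ
      rw [hc]
      simp only
      rw [Finset.sum_eq_single i]
      · simp [hμ]
      · intro j _ hj
        have : μ ∉ A j := fun hmem => (Finset.disjoint_left.1 (hdisj j i hj)) hmem hμ
        simp [this]
      · simp
    have hUS : ↑U ⊆ S := by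
      intro μ hμ
      simp only [hU, Finset.coe_biUnion, Set.mem_iUnion] at hμ
      obtain ⟨i, -, hi⟩ := hμ
      exact hDS i (hAD i hi)
    have hUinc : ∀ μ ∈ U, ∀ ν ∈ U, μ ≠ ν → Incomp μ ν := by
      intro μ hμ ν hν hne
      rw [hU, Finset.mem_biUnion] at hμ hν
      obtain ⟨i, -, hi⟩ := hμ
      obtain ⟨j, -, hj⟩ := hν
      by_cases hij : i = j
      · subst hij; exact hAinc i μ hi ν hj hne
      · exact hD i j hij μ (hAD i hi) ν (hAD j hj)
    have hsum : ∑ μ ∈ U, c μ • φ μ = ∑ i, α i • w i := by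
      have : ∀ μ ∈ U, c μ • φ μ = ∑ i, if μ ∈ A i then α i • φ μ else 0 := by
        intro μ _
        rw [hc]
        simp only
        rw [Finset.sum_smul]
        refine Finset.sum_congr rfl fun i _ => ?_
        split <;> simp
      rw [Finset.sum_congr rfl this, Finset.sum_comm]
      refine Finset.sum_congr rfl fun i _ => ?_
      rw [Finset.sum_ite_mem, Finset.inter_eq_right.2 (hAU i), hAsum i, Finset.smul_sum]
    have hw_norm : ∀ i, ‖w i‖ ^ p = ∑ μ ∈ A i, ‖φ μ‖ ^ p := by
      intro i
      have := FS' hφ (A i) (fun μ hμ => hDS i (hAD i hμ)) (hAinc i) (fun _ => (1:𝕜))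
      simp only [one_smul, norm_one, Real.one_rpow, one_mul] at this
      rw [hAsum i]
      exact this
    rw [← hsum, FS' hφ U hUS hUinc c]
    have : ∑ μ ∈ U, ‖c μ‖ ^ p * ‖φ μ‖ ^ p = ∑ i, ∑ μ ∈ A i, ‖c μ‖ ^ p * ‖φ μ‖ ^ p := by
      rw [hU, Finset.sum_biUnion]
      intro i _ j _ hij
      exact hdisj i j hij
    rw [this]
    refine Finset.sum_congr rfl fun i _ => ?_
    rw [hw_norm i, Finset.mul_sum]
    refine Finset.sum_congr rfl fun μ hμ => ?_
    rw [hcval i μ hμ]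
  -- pass to closure
  have hcont1 : Continuous fun w : ι → B => ‖∑ i, α i • w i‖ ^ p := by
    refine Continuous.rpow_const ?_ (fun _ => Or.inr hp0)
    exact (continuous_finset_sum Finset.univ
      (fun i _ => ((continuous_apply i).const_smul (α i)))).norm
  have hcont2 : Continuous fun w : ι → B => ∑ i, ‖α i‖ ^ p * ‖w i‖ ^ p := by
    refine continuous_finset_sum Finset.univ (fun i _ => ?_)
    exact continuous_const.mul (((continuous_apply i).norm).rpow_const (fun _ => Or.inr hp0))
  have hclosed : IsClosed {w : ι → B |
      ‖∑ i, α i • w i‖ ^ p = ∑ i, ‖α i‖ ^ p * ‖w i‖ ^ p} :=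
    isClosed_eq hcont1 hcont2
  have hvmem : v ∈ Set.pi Set.univ (fun i => closure (PreSupp (D i) φ)) :=
    fun i _ => hv i
  rw [← closure_pi_set] at hvmem
  exact closure_minimal key hclosed hvmem

end Part2
section Part3
variable {𝕜 B : Type*} [RCLike 𝕜] [NormedAddCommGroup B] [NormedSpace 𝕜 B]

lemma preSupp_mono {D D' : Set (List ℕ)} (h : D ⊆ D') (φ : List ℕ → B) :
    PreSupp D φ ⊆ PreSupp D' φ := by
  rintro x ⟨A, hAD, hAinc, rfl⟩
  exact ⟨A, fun μ hμ => h (hAD hμ), hAinc, rfl⟩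

lemma approx_self {D : Set (List ℕ)} {φ : List ℕ → B} {ν : List ℕ} (h : ν ∈ D) :
    φ ν ∈ closure (PreSupp D φ) := by
  apply subset_closure
  refine ⟨{ν}, by simpa using h, by simp, by simp⟩

/-- the tail `φ μ - ∑_{k ∈ KK} φ (μ ++ [k])` is approximable by antichains of proper
extensions of `μ` avoiding the children in `KK`. -/
lemma approx_tail {S : Set (List ℕ)} {φ : List ℕ → B} (hsum : Summative S φ)
    {μ : List ℕ} (hμ : μ ∈ S) (KK : Finset ℕ) (hKK : ∀ k ∈ KK, μ ++ [k] ∈ S)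
    (hne : KK.Nonempty) :
    φ μ - ∑ k ∈ KK, φ (μ ++ [k]) ∈
      closure (PreSupp {τ | τ ∈ S ∧ μ <+: τ ∧ μ ≠ τ ∧ ∀ k ∈ KK, ¬ (μ ++ [k] <+: τ)} φ) := by
  classical
  obtain ⟨k₀, hk₀⟩ := hne
  have hHS : HasSum (fun k : {k : ℕ // μ ++ [k] ∈ S} => φ (μ ++ [k.1])) (φ μ) :=
    hsum μ hμ ⟨k₀, hKK k₀ hk₀⟩
  set Kt : Finset {k : ℕ // μ ++ [k] ∈ S} := KK.subtype _ with hKt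
  have hKtsum : ∑ k ∈ Kt, φ (μ ++ [k.1]) = ∑ k ∈ KK, φ (μ ++ [k]) := by
    rw [hKt]
    exact Finset.sum_subtype_of_mem (fun k => φ (μ ++ [k])) hKK
  have htend : Filter.Tendsto
      (fun s : Finset {k : ℕ // μ ++ [k] ∈ S} =>
        (∑ k ∈ s, φ (μ ++ [k.1])) - ∑ k ∈ Kt, φ (μ ++ [k.1]))
      Filter.atTop (nhds (φ μ - ∑ k ∈ Kt, φ (μ ++ [k.1]))) :=
    Filter.Tendsto.sub_const hHS _
  rw [hKtsum] at htend
  refine mem_closure_of_tendsto htend ?_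
  filter_upwards [Filter.eventually_ge_atTop Kt] with s hs
  have hsd : (∑ k ∈ s, φ (μ ++ [k.1])) - ∑ k ∈ KK, φ (μ ++ [k]) =
      ∑ k ∈ s \ Kt, φ (μ ++ [k.1]) := by
    rw [← hKtsum, ← Finset.sum_sdiff (f := fun k => φ (μ ++ [k.1])) hs]
    abel
  rw [hsd]
  refine ⟨(s \ Kt).image (fun k => μ ++ [k.1]), ?_, ?_, ?_⟩
  · intro τ hτ
    simp only [Finset.coe_image, Set.mem_image, Finset.mem_coe, Finset.mem_sdiff] at hτ
    obtain ⟨k, ⟨-, hk2⟩, rfl⟩ := hτ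
    refine ⟨k.2, ⟨[k.1], rfl⟩, ?_, ?_⟩
    · intro heq
      have := congrArg List.length heq
      simp at this
    · intro k' hk' hpre
      have : k' = k.1 := by simpa using hpre.eq_of_length_le (by simp)
      subst this
      exact hk2 (by simp [hKt, Finset.mem_subtype, hk'])
  · intro τ hτ σ hσ hne
    simp only [Finset.mem_image] at hτ hσ
    obtain ⟨k, -, rfl⟩ := hτ
    obtain ⟨k', -, rfl⟩ := hσ
    refine incomp_append (fun h => hne ?_)
    rw [h]
  · rw [Finset.sum_image]
    intro k _ k' _ h
    have : k.1 = k'.1 := by simpa using h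
    exact Subtype.ext this

end Part3
section Part4
variable {𝕜 B : Type*} [RCLike 𝕜] [NormedAddCommGroup B] [NormedSpace 𝕜 B]

lemma strict_prefix_length {μ τ : List ℕ} (h : μ <+: τ) (hne : μ ≠ τ) :
    μ.length < τ.length := by
  rcases lt_or_eq_of_le h.length_le with h1 | h1
  · exact h1
  · exact absurd (h.eq_of_length_le (le_of_eq h1.symm)) hne

/-- the prefix-closure of a finite set of nodes -/
def treeOf (F : Finset (List ℕ)) : Finset (List ℕ) :=
  F.biUnion fun ν => ν.inits.toFinset

lemma mem_treeOf {F : Finset (List ℕ)} {μ : List ℕ} :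
    μ ∈ treeOf F ↔ ∃ ν ∈ F, μ <+: ν := by
  simp [treeOf, List.mem_inits]

lemma subset_treeOf (F : Finset (List ℕ)) : F ⊆ treeOf F :=
  fun ν hν => mem_treeOf.2 ⟨ν, hν, List.prefix_refl ν⟩

lemma treeOf_prefix_closed {F : Finset (List ℕ)} {μ ρ : List ℕ}
    (hμ : μ ∈ treeOf F) (hρ : ρ <+: μ) : ρ ∈ treeOf F := by
  obtain ⟨ν, hν, hpre⟩ := mem_treeOf.1 hμ
  exact mem_treeOf.2 ⟨ν, hν, hρ.trans hpre⟩

lemma treeOf_subset_S {S : Set (List ℕ)} (hS : IsTree S) {F : Finset (List ℕ)}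
    (hF : ↑F ⊆ S) : ↑(treeOf F) ⊆ S := by
  intro μ hμ
  obtain ⟨ν, hν, hpre⟩ := mem_treeOf.1 hμ
  exact hS.2 ν (hF hν) μ hpre

/-- the children directions of `μ` within the prefix closure of `F` -/
def KF (F : Finset (List ℕ)) (μ : List ℕ) : Finset ℕ :=
  ((treeOf F).image (fun σ => σ.getD μ.length 0)).filter (fun k => μ ++ [k] ∈ treeOf F)

lemma mem_KF {F : Finset (List ℕ)} {μ : List ℕ} {k : ℕ} :
    k ∈ KF F μ ↔ μ ++ [k] ∈ treeOf F := by
  constructor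
  · intro h
    exact (Finset.mem_filter.1 h).2
  · intro h
    refine Finset.mem_filter.2 ⟨Finset.mem_image.2 ⟨μ ++ [k], h, getD_append μ k⟩, h⟩

/-- the support region of the remainder vector at `μ` -/
def DD (F : Finset (List ℕ)) (S : Set (List ℕ)) (μ : List ℕ) : Set (List ℕ) :=
  {τ | τ ∈ S ∧ μ <+: τ ∧ (KF F μ = ∅ ∨ μ ≠ τ) ∧ ∀ k ∈ KF F μ, ¬ (μ ++ [k] <+: τ)}

lemma DD_subset {F S μ} : DD F S μ ⊆ S := fun _ hτ => hτ.1

lemma DD_incomp_ext {F : Finset (List ℕ)} {S : Set (List ℕ)} {μ τ τ' : List ℕ} {k : ℕ}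
    (hk : k ∈ KF F μ) (hτ : τ ∈ DD F S μ) (hτ' : μ ++ [k] <+: τ') : Incomp τ τ' := by
  obtain ⟨-, hμτ, hor, hnot⟩ := hτ
  have hne : μ ≠ τ := by
    rcases hor with h | h
    · exact absurd hk (by simp [h])
    · exact h
  have hlen : μ.length < τ.length := strict_prefix_length hμτ hne
  constructor
  · intro hpre
    rcases List.prefix_or_prefix_of_prefix (hpre : τ <+: τ') hτ' with h1 | h1
    · have : τ = μ ++ [k] := h1.eq_of_length_le (by simpa using hlen)
      exact hnot k hk (this ▸ List.prefix_refl _)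
    · exact hnot k hk h1
  · intro hpre
    exact hnot k hk (hτ'.trans hpre)

lemma DD_incomp {F : Finset (List ℕ)} {S : Set (List ℕ)} {μ μ' : List ℕ}
    (hμ : μ ∈ treeOf F) (hμ' : μ' ∈ treeOf F) (hne : μ ≠ μ')
    {τ τ' : List ℕ} (hτ : τ ∈ DD F S μ) (hτ' : τ' ∈ DD F S μ') : Incomp τ τ' := by
  by_cases h1 : μ <+: μ'
  · have hk : μ'.getD μ.length 0 ∈ KF F μ :=
      mem_KF.2 (treeOf_prefix_closed hμ' (step_prefix h1 hne))
    exact DD_incomp_ext hk hτ ((step_prefix h1 hne).trans hτ'.2.1)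
  · by_cases h2 : μ' <+: μ
    · have hk : μ.getD μ'.length 0 ∈ KF F μ' :=
        mem_KF.2 (treeOf_prefix_closed hμ (step_prefix h2 (Ne.symm hne)))
      exact incomp_symm (DD_incomp_ext hk hτ' ((step_prefix h2 (Ne.symm hne)).trans hτ.2.1))
    · exact incomp_of_incomp_prefix ⟨h1, h2⟩ hτ.2.1 hτ'.2.1

/-- the remainder vector at `μ` is approximable within its region -/
lemma w_mem {S : Set (List ℕ)} {φ : List ℕ → B} (hS : IsTree S) (hsum : Summative S φ)
    {F : Finset (List ℕ)} (hF : ↑F ⊆ S) {μ : List ℕ} (hμ : μ ∈ treeOf F) :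
    φ μ - ∑ k ∈ KF F μ, φ (μ ++ [k]) ∈ closure (PreSupp (DD F S μ) φ) := by
  have hμS : μ ∈ S := treeOf_subset_S hS hF hμ
  by_cases h : KF F μ = ∅
  · rw [h]
    simp only [Finset.sum_empty, sub_zero]
    exact approx_self ⟨hμS, List.prefix_refl μ, Or.inl h, by simp [h]⟩
  · have hKK : ∀ k ∈ KF F μ, μ ++ [k] ∈ S := fun k hk =>
      treeOf_subset_S hS hF (mem_KF.1 hk)
    refine closure_mono (preSupp_mono ?_ φ)
      (approx_tail hsum hμS (KF F μ) hKK (Finset.nonempty_iff_ne_empty.2 h))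
    rintro τ ⟨h1, h2, h3, h4⟩
    exact ⟨h1, h2, Or.inr h3, h4⟩

/-- norm recursion for the remainder vector -/
lemma norm_w {p : ℝ} (hp : 1 ≤ p) {S : Set (List ℕ)} {φ : List ℕ → B} (hS : IsTree S)
    (hsum : Summative S φ) (hsep : FormallySeparating (𝕜 := 𝕜) p S φ)
    {F : Finset (List ℕ)} (hF : ↑F ⊆ S) {μ : List ℕ} (hμ : μ ∈ treeOf F) :
    ‖φ μ - ∑ k ∈ KF F μ, φ (μ ++ [k])‖ ^ p
      = ‖φ μ‖ ^ p - ∑ k ∈ KF F μ, ‖φ (μ ++ [k])‖ ^ p := by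
  classical
  by_cases h : KF F μ = ∅
  · simp [h]
  · -- use C'' over Option {k // k ∈ KF F μ}
    set w : B := φ μ - ∑ k ∈ KF F μ, φ (μ ++ [k]) with hw
    set D : Option {k : ℕ // k ∈ KF F μ} → Set (List ℕ) := fun o =>
      Option.rec (DD F S μ) (fun k => {τ | τ ∈ S ∧ μ ++ [k.1] <+: τ}) o with hD
    set v : Option {k : ℕ // k ∈ KF F μ} → B := fun o =>
      Option.rec w (fun k => φ (μ ++ [k.1])) o with hv
    have key := C'' (𝕜 := 𝕜) hp hsep D ?_ ?_ v ?_ (fun _ => (1:𝕜))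
    · simp only [one_smul, norm_one, Real.one_rpow, one_mul] at key
      rw [Fintype.sum_option, Fintype.sum_option] at key
      have hvs : ∑ k : {k : ℕ // k ∈ KF F μ}, v (some k) = ∑ k ∈ KF F μ, φ (μ ++ [k]) := by
        rw [hv]
        simp only
        rw [← Finset.sum_coe_sort (KF F μ) (fun k => φ (μ ++ [k]))]
      have hns : ∑ k : {k : ℕ // k ∈ KF F μ}, ‖v (some k)‖ ^ p
          = ∑ k ∈ KF F μ, ‖φ (μ ++ [k])‖ ^ p := by
        rw [hv]
        simp only
        rw [← Finset.sum_coe_sort (KF F μ) (fun k => ‖φ (μ ++ [k])‖ ^ p)]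
      rw [hvs, hns] at key
      have : v none + ∑ k ∈ KF F μ, φ (μ ++ [k]) = φ μ := by
        rw [hv]; simp only; rw [hw]; abel
      rw [this] at key
      rw [key]
      simp only [hv]
      ring
    · intro o
      rcases o with - | k
      · exact DD_subset
      · exact fun τ hτ => hτ.1
    · intro i j hij
      rcases i with - | k <;> rcases j with - | k'
      · exact absurd rfl hij
      · intro τ hτ τ' hτ'
        exact DD_incomp_ext k'.2 hτ hτ'.2
      · intro τ hτ τ' hτ'
        exact incomp_symm (DD_incomp_ext k.2 hτ' hτ.2)
      · intro τ hτ τ' hτ'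
        have hkk : k.1 ≠ k'.1 := fun hh => hij (by simp [Subtype.ext hh])
        exact incomp_of_incomp_prefix (incomp_append hkk) hτ.2 hτ'.2
    · intro o
      rcases o with - | k
      · exact w_mem hS hsum hF hμ
      · exact approx_self ⟨treeOf_subset_S hS hF (mem_KF.1 k.2), List.prefix_refl _⟩

end Part4
section Part5
variable {𝕜 B : Type*} [RCLike 𝕜] [NormedAddCommGroup B] [NormedSpace 𝕜 B]

/-- coefficient accumulated along the branch to `μ` -/
def AC (F : Finset (List ℕ)) (a : List ℕ → 𝕜) (μ : List ℕ) : 𝕜 :=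
  ∑ ν ∈ F.filter (· <+: μ), a ν

lemma AC_nil (F : Finset (List ℕ)) (a : List ℕ → 𝕜) :
    AC F a [] = if [] ∈ F then a [] else 0 := by
  classical
  rw [AC]
  have : F.filter (· <+: ([] : List ℕ)) = F.filter (· = ([] : List ℕ)) := by
    apply Finset.filter_congr
    intro ν _
    simp [List.prefix_nil]
  rw [this, Finset.sum_filter]
  split <;> rename_i h <;> simp [h]

lemma AC_step (F : Finset (List ℕ)) (a : List ℕ → 𝕜) {μ : List ℕ} (hμ : μ ≠ []) :
    AC F a μ = AC F a μ.dropLast + if μ ∈ F then a μ else 0 := by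
  classical
  have hsplit : F.filter (· <+: μ) = F.filter (· <+: μ.dropLast) ∪ F.filter (· = μ) := by
    ext ν
    simp only [Finset.mem_filter, Finset.mem_union]
    constructor
    · rintro ⟨h1, h2⟩
      by_cases h : ν = μ
      · exact Or.inr ⟨h1, h⟩
      · exact Or.inl ⟨h1, (prefix_dropLast_iff hμ).2 ⟨h2, h⟩⟩
    · rintro (⟨h1, h2⟩ | ⟨h1, h2⟩)
      · exact ⟨h1, ((prefix_dropLast_iff hμ).1 h2).1⟩
      · exact ⟨h1, h2 ▸ List.prefix_refl μ⟩
  have hdisj : Disjoint (F.filter (· <+: μ.dropLast)) (F.filter (· = μ)) := by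
    rw [Finset.disjoint_left]
    rintro ν h1 h2
    have h1' := (Finset.mem_filter.1 h1).2
    have h2' := (Finset.mem_filter.1 h2).2
    exact ((prefix_dropLast_iff hμ).1 h1').2 h2'
  rw [AC, hsplit, Finset.sum_union hdisj, Finset.filter_eq']
  congr 1
  split <;> simp

/-- the basic decomposition identity -/
lemma ident (F : Finset (List ℕ)) (a : List ℕ → 𝕜) (φ : List ℕ → B) :
    ∑ ν ∈ F, a ν • φ ν =
      ∑ μ ∈ treeOf F, AC F a μ • (φ μ - ∑ k ∈ KF F μ, φ (μ ++ [k])) := by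
  classical
  have step1 : ∑ μ ∈ treeOf F, ∑ k ∈ KF F μ, AC F a μ • φ (μ ++ [k])
      = ∑ σ ∈ (treeOf F).filter (· ≠ []), AC F a σ.dropLast • φ σ := by
    rw [Finset.sum_sigma' (treeOf F) (fun μ => KF F μ) (fun μ k => AC F a μ • φ (μ ++ [k]))]
    refine Finset.sum_nbij' (fun x => x.1 ++ [x.2]) (fun σ => ⟨σ.dropLast, σ.getLastD 0⟩)
      ?_ ?_ ?_ ?_ ?_
    · rintro ⟨μ, k⟩ hx
      rw [Finset.mem_sigma] at hx
      refine Finset.mem_filter.2 ⟨mem_KF.1 hx.2, by simp⟩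
    · rintro σ hσ
      rw [Finset.mem_filter] at hσ
      rw [Finset.mem_sigma]
      constructor
      · exact treeOf_prefix_closed hσ.1 (List.dropLast_prefix σ)
      · exact mem_KF.2 (by rw [dropLast_append_getLastD hσ.2]; exact hσ.1)
    · rintro ⟨μ, k⟩ _
      simp only [List.dropLast_concat, List.getLastD_concat]
    · rintro σ hσ
      exact dropLast_append_getLastD (Finset.mem_filter.1 hσ).2
    · rintro ⟨μ, k⟩ _
      simp only [List.dropLast_concat]
  have step2 : ∑ σ ∈ (treeOf F).filter (· ≠ []), AC F a σ.dropLast • φ σ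
      = ∑ σ ∈ treeOf F, (if σ ≠ [] then AC F a σ.dropLast else 0) • φ σ := by
    rw [Finset.sum_filter]
    refine Finset.sum_congr rfl fun σ _ => ?_
    split <;> simp
  rw [Finset.sum_congr rfl (fun μ (_ : μ ∈ treeOf F) =>
    (smul_sub (AC F a μ) (φ μ) (∑ k ∈ KF F μ, φ (μ ++ [k]))).trans
      (by rw [Finset.smul_sum]))]
  rw [Finset.sum_sub_distrib, step1, step2, ← Finset.sum_sub_distrib]
  have step3 : ∀ μ ∈ treeOf F,
      AC F a μ • φ μ - (if μ ≠ [] then AC F a μ.dropLast else 0) • φ μ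
        = (if μ ∈ F then a μ else 0) • φ μ := by
    intro μ _
    rw [← sub_smul]
    congr 1
    by_cases h : μ = []
    · subst h
      rw [AC_nil]
      simp
    · rw [AC_step F a h]
      simp [h]
  rw [Finset.sum_congr rfl step3]
  have step4 : ∑ μ ∈ treeOf F, (if μ ∈ F then a μ else 0) • φ μ
      = ∑ μ ∈ (treeOf F).filter (· ∈ F), a μ • φ μ := by
    rw [Finset.sum_filter]
    refine Finset.sum_congr rfl fun μ _ => ?_
    split <;> simp
  rw [step4]
  have : (treeOf F).filter (· ∈ F) = F := by
    ext μ
    simp only [Finset.mem_filter]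
    exact ⟨fun h => h.2, fun h => ⟨subset_treeOf F h, h⟩⟩
  rw [this]

/-- the norm of a finite combination is determined by branch coefficients and the
norm data of the disintegration, through the combinatorics of `F` -/
lemma side {p : ℝ} (hp : 1 ≤ p) {S : Set (List ℕ)} {φ : List ℕ → B} (hS : IsTree S)
    (hsum : Summative S φ) (hsep : FormallySeparating (𝕜 := 𝕜) p S φ)
    (F : Finset (List ℕ)) (hF : ↑F ⊆ S) (a : List ℕ → 𝕜) :
    ‖∑ ν ∈ F, a ν • φ ν‖ ^ p
      = ∑ μ ∈ treeOf F, ‖AC F a μ‖ ^ p *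
          (‖φ μ‖ ^ p - ∑ k ∈ KF F μ, ‖φ (μ ++ [k])‖ ^ p) := by
  classical
  rw [ident F a φ]
  have key := C'' (𝕜 := 𝕜) hp hsep (ι := {x // x ∈ treeOf F})
    (fun μ => DD F S μ.1) (fun μ => DD_subset)
    (fun i j hij τ hτ τ' hτ' => DD_incomp i.2 j.2 (fun h => hij (Subtype.ext h)) hτ hτ')
    (fun μ => φ μ.1 - ∑ k ∈ KF F μ.1, φ (μ.1 ++ [k]))
    (fun μ => w_mem hS hsum hF μ.2)
    (fun μ => AC F a μ.1)
  rw [Finset.sum_coe_sort (treeOf F)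
    (fun μ => AC F a μ • (φ μ - ∑ k ∈ KF F μ, φ (μ ++ [k])))] at key
  rw [Finset.sum_coe_sort (treeOf F)
    (fun μ => ‖AC F a μ‖ ^ p * ‖φ μ - ∑ k ∈ KF F μ, φ (μ ++ [k])‖ ^ p)] at key
  rw [key]
  refine Finset.sum_congr rfl fun μ hμ => ?_
  rw [norm_w hp hS hsum hsep hF hμ]

end Part5
section Part6
variable {𝕜 : Type*} [RCLike 𝕜]

lemma rpow_norm_inj {p : ℝ} (hp : 1 ≤ p) {x y : ℝ} (hx : 0 ≤ x) (hy : 0 ≤ y)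
    (h : x ^ p = y ^ p) : x = y := by
  have hp0 : (0:ℝ) < p := lt_of_lt_of_le zero_lt_one hp
  rcases lt_trichotomy x y with h1 | h1 | h1
  · exact absurd h (ne_of_lt (Real.rpow_lt_rpow hx h1 hp0))
  · exact h1
  · exact absurd h.symm (ne_of_lt (Real.rpow_lt_rpow hy h1 hp0))

section Trees
variable {S₀ S₁ : Set (List ℕ)} {f : List ℕ → List ℕ}

lemma f_injOn (hf_ord : ∀ ν ∈ S₀, ∀ μ ∈ S₀, (ν <+: μ ↔ f ν <+: f μ)) :
    Set.InjOn f S₀ := by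
  intro ν hν μ hμ h
  have h1 : ν <+: μ := (hf_ord ν hν μ hμ).2 (h ▸ List.prefix_refl _)
  have h2 : μ <+: ν := (hf_ord μ hμ ν hν).2 (h ▸ List.prefix_refl _)
  exact h1.eq_of_length_le h2.length_le

variable (hS₀ : IsTree S₀) (hS₁ : IsTree S₁)
  (hf_maps : ∀ ν ∈ S₀, f ν ∈ S₁)
  (hf_surj : ∀ τ ∈ S₁, ∃ ν ∈ S₀, f ν = τ)
  (hf_ord : ∀ ν ∈ S₀, ∀ μ ∈ S₀, (ν <+: μ ↔ f ν <+: f μ))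

include hS₁ hf_maps hf_surj hf_ord in
lemma child_image {μ σ : List ℕ} (hμ : μ ∈ S₀) (hσ : σ ∈ S₀)
    (hpre : μ <+: σ) (hlen : σ.length = μ.length + 1) :
    f μ <+: f σ ∧ (f σ).length = (f μ).length + 1 := by
  have hne : μ ≠ σ := fun h => by rw [h] at hlen; omega
  have hpre1 : f μ <+: f σ := (hf_ord μ hμ σ hσ).1 hpre
  have hne1 : f μ ≠ f σ := fun h => hne (f_injOn hf_ord hμ hσ h)
  have hlt : (f μ).length < (f σ).length := strict_prefix_length hpre1 hne1
  refine ⟨hpre1, ?_⟩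
  by_contra hcon
  have hlt2 : (f μ).length + 1 < (f σ).length := by omega
  set τ := (f σ).take ((f μ).length + 1) with hτ
  have hτpre : τ <+: f σ := List.take_prefix _ _
  have hτlen : τ.length = (f μ).length + 1 := by
    rw [hτ, List.length_take]; omega
  have hτS : τ ∈ S₁ := hS₁.2 _ (hf_maps σ hσ) τ hτpre
  obtain ⟨ρ, hρ, hρτ⟩ := hf_surj τ hτS
  have h1 : f μ <+: τ := by
    rcases List.prefix_or_prefix_of_prefix hpre1 hτpre with h | h
    · exact h
    · have heq := h.eq_of_length_le (by omega)
      rw [heq] at hτlen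
      omega
  have hμρ : μ <+: ρ := (hf_ord μ hμ ρ hρ).2 (hρτ ▸ h1)
  have hρσ : ρ <+: σ := (hf_ord ρ hρ σ hσ).2 (hρτ ▸ hτpre)
  have hlρ : (f ρ).length = (f μ).length + 1 := by rw [hρτ]; omega
  have hμρne : μ ≠ ρ := by
    intro h
    rw [← h] at hlρ
    omega
  have hρσne : ρ ≠ σ := by
    intro h
    rw [h] at hlρ
    omega
  have l1 := strict_prefix_length hμρ hμρne
  have l2 := strict_prefix_length hρσ hρσne
  omega

include hS₀ hf_ord in
lemma child_preimage {μ σ : List ℕ} (hμ : μ ∈ S₀) (hσ : σ ∈ S₀)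
    (hpre : f μ <+: f σ) (hlen : (f σ).length = (f μ).length + 1) :
    μ <+: σ ∧ σ.length = μ.length + 1 := by
  have hμσ : μ <+: σ := (hf_ord μ hμ σ hσ).2 hpre
  have hne : μ ≠ σ := by
    intro h
    rw [h] at hlen
    omega
  have hlt := strict_prefix_length hμσ hne
  refine ⟨hμσ, ?_⟩
  by_contra hcon
  have hlt2 : μ.length + 1 < σ.length := by omega
  set ρ := σ.take (μ.length + 1) with hρ
  have hρpre : ρ <+: σ := List.take_prefix _ _
  have hρlen : ρ.length = μ.length + 1 := by rw [hρ, List.length_take]; omega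
  have hρS : ρ ∈ S₀ := hS₀.2 σ hσ ρ hρpre
  have hμρ : μ <+: ρ := by
    rcases List.prefix_or_prefix_of_prefix hμσ hρpre with h | h
    · exact h
    · have heq := h.eq_of_length_le (by omega)
      rw [heq] at hρlen
      omega
  have hμρne : μ ≠ ρ := fun h => by rw [← h] at hρlen; omega
  have hρσne : ρ ≠ σ := fun h => by rw [h] at hρlen; omega
  have g1 := strict_prefix_length ((hf_ord μ hμ ρ hρS).1 hμρ)
    (fun h => hμρne (f_injOn hf_ord hμ hρS h))
  have g2 := strict_prefix_length ((hf_ord ρ hρS σ hσ).1 hρpre)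
    (fun h => hρσne (f_injOn hf_ord hρS hσ h))
  omega

include hS₀ hS₁ hf_maps hf_surj hf_ord in
lemma treeOf_image {F : Finset (List ℕ)} (hF : ↑F ⊆ S₀) :
    treeOf (F.image f) = (treeOf F).image f := by
  classical
  ext σ
  constructor
  · intro hσ
    obtain ⟨τ, hτ, hpre⟩ := mem_treeOf.1 hσ
    obtain ⟨ν, hν, rfl⟩ := Finset.mem_image.1 hτ
    have hσS₁ : σ ∈ S₁ := hS₁.2 _ (hf_maps ν (hF hν)) σ hpre
    obtain ⟨μ, hμ, rfl⟩ := hf_surj σ hσS₁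
    exact Finset.mem_image.2
      ⟨μ, mem_treeOf.2 ⟨ν, hν, (hf_ord μ hμ ν (hF hν)).2 hpre⟩, rfl⟩
  · intro hσ
    obtain ⟨μ, hμT, rfl⟩ := Finset.mem_image.1 hσ
    obtain ⟨ν, hν, hpre⟩ := mem_treeOf.1 hμT
    have hμS : μ ∈ S₀ := hS₀.2 ν (hF hν) μ hpre
    exact mem_treeOf.2
      ⟨f ν, Finset.mem_image_of_mem f hν, (hf_ord μ hμS ν (hF hν)).1 hpre⟩

include hS₀ hS₁ hf_maps hf_surj hf_ord in
lemma child_step {F : Finset (List ℕ)} (hF : ↑F ⊆ S₀) {μ : List ℕ} (hμ : μ ∈ treeOf F)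
    {k : ℕ} (hk : k ∈ KF F μ) :
    f (μ ++ [k]) = f μ ++ [(f (μ ++ [k])).getD (f μ).length 0] := by
  have hμS : μ ∈ S₀ := treeOf_subset_S hS₀ hF hμ
  have hσS : μ ++ [k] ∈ S₀ := treeOf_subset_S hS₀ hF (mem_KF.1 hk)
  obtain ⟨hpre, hlen⟩ := child_image hS₁ hf_maps hf_surj hf_ord hμS hσS
    ⟨[k], rfl⟩ (by simp)
  have hne : f μ ≠ f (μ ++ [k]) := fun h => by rw [h] at hlen; omega
  exact ((step_prefix hpre hne).eq_of_length_le (by simp [hlen])).symm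

include hS₀ hS₁ hf_maps hf_surj hf_ord in
lemma KF_image {F : Finset (List ℕ)} (hF : ↑F ⊆ S₀) {μ : List ℕ} (hμ : μ ∈ treeOf F) :
    KF (F.image f) (f μ) =
      (KF F μ).image (fun k => (f (μ ++ [k])).getD (f μ).length 0) := by
  classical
  have hμS : μ ∈ S₀ := treeOf_subset_S hS₀ hF hμ
  ext k'
  constructor
  · intro hk'
    have h1 : f μ ++ [k'] ∈ (treeOf F).image f := by
      rw [← treeOf_image hS₀ hS₁ hf_maps hf_surj hf_ord hF]
      exact mem_KF.1 hk'
    obtain ⟨σ, hσT, hfσ⟩ := Finset.mem_image.1 h1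
    have hσS : σ ∈ S₀ := treeOf_subset_S hS₀ hF hσT
    obtain ⟨hpre, hlen⟩ := child_preimage hS₀ hf_ord hμS hσS
      (by rw [hfσ]; exact ⟨[k'], rfl⟩) (by rw [hfσ]; simp)
    have hμσne : μ ≠ σ := fun h => by rw [h] at hlen; omega
    have hσeq : μ ++ [σ.getD μ.length 0] = σ :=
      (step_prefix hpre hμσne).eq_of_length_le (by simp [hlen])
    set k := σ.getD μ.length 0 with hkdef
    have hkKF : k ∈ KF F μ := mem_KF.2 (by rw [hσeq]; exact hσT)
    refine Finset.mem_image.2 ⟨k, hkKF, ?_⟩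
    rw [hσeq, hfσ, getD_append]
  · intro hk'
    obtain ⟨k, hk, rfl⟩ := Finset.mem_image.1 hk'
    rw [mem_KF, ← child_step hS₀ hS₁ hf_maps hf_surj hf_ord hF hμ hk,
      treeOf_image hS₀ hS₁ hf_maps hf_surj hf_ord hF]
    exact Finset.mem_image_of_mem f (mem_KF.1 hk)

omit hS₁ hf_maps hf_surj in
include hf_ord in
lemma AC_image {F : Finset (List ℕ)} (hF : ↑F ⊆ S₀) (a : List ℕ → 𝕜)
    {μ : List ℕ} (hμS : μ ∈ S₀) :
    AC (F.image f) (fun τ => a (Function.invFunOn f S₀ τ)) (f μ) = AC F a μ := by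
  classical
  rw [AC, AC]
  have hfil : (F.image f).filter (· <+: f μ) = (F.filter (· <+: μ)).image f := by
    ext τ
    simp only [Finset.mem_filter, Finset.mem_image]
    constructor
    · rintro ⟨⟨ν, hν, rfl⟩, hpre⟩
      exact ⟨ν, ⟨hν, (hf_ord ν (hF hν) μ hμS).2 hpre⟩, rfl⟩
    · rintro ⟨ν, ⟨hν, hpre⟩, rfl⟩
      exact ⟨⟨ν, hν, rfl⟩, (hf_ord ν (hF hν) μ hμS).1 hpre⟩
  rw [hfil, Finset.sum_image (fun x hx y hy h =>
    f_injOn hf_ord (hF (Finset.mem_of_mem_filter x hx)) (hF (Finset.mem_of_mem_filter y hy)) h)]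
  refine Finset.sum_congr rfl fun ν hν => ?_
  rw [(f_injOn hf_ord).leftInvOn_invFunOn (hF (Finset.mem_of_mem_filter ν hν))]

end Trees

section MainNorm
variable {B₀ B₁ : Type*} [NormedAddCommGroup B₀] [NormedSpace 𝕜 B₀]
  [NormedAddCommGroup B₁] [NormedSpace 𝕜 B₁]

lemma main_norm {p : ℝ} (hp : 1 ≤ p) {S₀ S₁ : Set (List ℕ)}
    {φ₀ : List ℕ → B₀} {φ₁ : List ℕ → B₁} {f : List ℕ → List ℕ}
    (hS₀ : IsTree S₀) (hsum₀ : Summative S₀ φ₀)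
    (hsep₀ : FormallySeparating (𝕜 := 𝕜) p S₀ φ₀)
    (hS₁ : IsTree S₁) (hsum₁ : Summative S₁ φ₁)
    (hsep₁ : FormallySeparating (𝕜 := 𝕜) p S₁ φ₁)
    (hf_maps : ∀ ν ∈ S₀, f ν ∈ S₁)
    (hf_surj : ∀ τ ∈ S₁, ∃ ν ∈ S₀, f ν = τ)
    (hf_ord : ∀ ν ∈ S₀, ∀ μ ∈ S₀, (ν <+: μ ↔ f ν <+: f μ))
    (hf_norm : ∀ ν ∈ S₀, ‖φ₁ (f ν)‖ = ‖φ₀ ν‖)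
    (F : Finset (List ℕ)) (hF : ↑F ⊆ S₀) (a : List ℕ → 𝕜) :
    ‖∑ ν ∈ F, a ν • φ₁ (f ν)‖ = ‖∑ ν ∈ F, a ν • φ₀ ν‖ := by
  classical
  set a₁ : List ℕ → 𝕜 := fun τ => a (Function.invFunOn f S₀ τ) with ha₁def
  have ha₁ : ∀ ν ∈ S₀, a₁ (f ν) = a ν := fun ν hν => by
    rw [ha₁def]
    simp only
    rw [(f_injOn hf_ord).leftInvOn_invFunOn hν]
  have hF₁ : ↑(F.image f) ⊆ S₁ := by
    rw [Finset.coe_image]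
    rintro τ ⟨ν, hν, rfl⟩
    exact hf_maps ν (hF hν)
  have hsum_eq : ∑ τ ∈ F.image f, a₁ τ • φ₁ τ = ∑ ν ∈ F, a ν • φ₁ (f ν) := by
    rw [Finset.sum_image (fun x hx y hy h => f_injOn hf_ord (hF hx) (hF hy) h)]
    exact Finset.sum_congr rfl fun ν hν => by rw [ha₁ ν (hF hν)]
  have s₀ := side (𝕜 := 𝕜) hp hS₀ hsum₀ hsep₀ F hF a
  have s₁ := side (𝕜 := 𝕜) hp hS₁ hsum₁ hsep₁ (F.image f) hF₁ a₁
  rw [hsum_eq] at s₁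
  apply rpow_norm_inj hp (norm_nonneg _) (norm_nonneg _)
  rw [s₀, s₁, treeOf_image hS₀ hS₁ hf_maps hf_surj hf_ord hF,
    Finset.sum_image (fun x hx y hy h =>
      f_injOn hf_ord (treeOf_subset_S hS₀ hF hx) (treeOf_subset_S hS₀ hF hy) h)]
  refine Finset.sum_congr rfl fun μ hμ => ?_
  have hμS : μ ∈ S₀ := treeOf_subset_S hS₀ hF hμ
  congr 1
  · rw [AC_image hf_ord hF a hμS]
  · rw [hf_norm μ hμS, KF_image hS₀ hS₁ hf_maps hf_surj hf_ord hF hμ,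
      Finset.sum_image ?hinj]
    case hinj =>
      intro x hx y hy h
      have hx' : f (μ ++ [x]) = f (μ ++ [y]) := by
        rw [child_step hS₀ hS₁ hf_maps hf_surj hf_ord hF hμ hx,
          child_step hS₀ hS₁ hf_maps hf_surj hf_ord hF hμ hy]
        exact congrArg (fun t => f μ ++ [t]) h
      have := f_injOn hf_ord (treeOf_subset_S hS₀ hF (mem_KF.1 hx))
        (treeOf_subset_S hS₀ hF (mem_KF.1 hy)) hx'
      simpa using this
    congr 1
    refine Finset.sum_congr rfl fun k hk => ?_
    rw [← child_step hS₀ hS₁ hf_maps hf_surj hf_ord hF hμ hk,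
      hf_norm _ (treeOf_subset_S hS₀ hF (mem_KF.1 hk))]

end MainNorm
end Part6
end Stmt2Aux

/-- an isomorphism of `L^p`-formal disintegrations induces a unique
isometric isomorphism of the underlying Banach spaces. -/
theorem stmt2 {𝕜 : Type*} [RCLike 𝕜] {B₀ B₁ : Type*}
    [NormedAddCommGroup B₀] [NormedSpace 𝕜 B₀] [CompleteSpace B₀]
    [NormedAddCommGroup B₁] [NormedSpace 𝕜 B₁] [CompleteSpace B₁]
    (p : ℝ) (hp : 1 ≤ p)
    (S₀ S₁ : Set (List ℕ)) (φ₀ : List ℕ → B₀) (φ₁ : List ℕ → B₁)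
    (h₀ : IsFormalDisintegration 𝕜 p S₀ φ₀)
    (h₁ : IsFormalDisintegration 𝕜 p S₁ φ₁)
    (f : List ℕ → List ℕ)
    (hf_maps : ∀ ν ∈ S₀, f ν ∈ S₁)
    (hf_surj : ∀ τ ∈ S₁, ∃ ν ∈ S₀, f ν = τ)
    (hf_ord : ∀ ν ∈ S₀, ∀ μ ∈ S₀, (ν <+: μ ↔ f ν <+: f μ))
    (hf_norm : ∀ ν ∈ S₀, ‖φ₁ (f ν)‖ = ‖φ₀ ν‖) :
    ∃! T : B₀ ≃ₗᵢ[𝕜] B₁, ∀ ν ∈ S₀, T (φ₀ ν) = φ₁ (f ν) := by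
  classical
  obtain ⟨hS₀, hsum₀, hsep₀, hnz₀, hdense₀⟩ := h₀
  obtain ⟨hS₁, hsum₁, hsep₁, hnz₁, hdense₁⟩ := h₁
  set ℓ₀ : ({ν // ν ∈ S₀} →₀ 𝕜) →ₗ[𝕜] B₀ :=
    Finsupp.linearCombination 𝕜 (fun ν : {ν // ν ∈ S₀} => φ₀ ν.1) with hℓ₀
  set ℓ₁ : ({ν // ν ∈ S₀} →₀ 𝕜) →ₗ[𝕜] B₁ :=
    Finsupp.linearCombination 𝕜 (fun ν : {ν // ν ∈ S₀} => φ₁ (f ν.1)) with hℓ₁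
  have hnorm : ∀ y, ‖ℓ₁ y‖ = ‖ℓ₀ y‖ := by
    intro y
    rw [hℓ₀, hℓ₁, Finsupp.linearCombination_apply, Finsupp.linearCombination_apply,
      Finsupp.sum, Finsupp.sum]
    set F : Finset (List ℕ) := y.support.image Subtype.val with hFdef
    set a : List ℕ → 𝕜 := fun l => if h : l ∈ S₀ then y ⟨l, h⟩ else 0 with hadef
    have hinj : ∀ x ∈ y.support, ∀ z ∈ y.support, (x : List ℕ) = z → x = z :=
      fun x _ z _ h => Subtype.ext h
    have e₀ : ∑ ν ∈ y.support, y ν • φ₀ ν.1 = ∑ l ∈ F, a l • φ₀ l := by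
      rw [hFdef, Finset.sum_image hinj]
      refine Finset.sum_congr rfl fun ν _ => ?_
      rw [hadef]
      simp only [ν.2, dif_pos]
    have e₁ : ∑ ν ∈ y.support, y ν • φ₁ (f ν.1) = ∑ l ∈ F, a l • φ₁ (f l) := by
      rw [hFdef, Finset.sum_image hinj]
      refine Finset.sum_congr rfl fun ν _ => ?_
      rw [hadef]
      simp only [ν.2, dif_pos]
    have hF : ↑F ⊆ S₀ := by
      rw [hFdef, Finset.coe_image]
      rintro l ⟨ν, -, rfl⟩
      exact ν.2
    rw [e₀, e₁]
    exact Stmt2Aux.main_norm hp hS₀ hsum₀ hsep₀ hS₁ hsum₁ hsep₁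
      hf_maps hf_surj hf_ord hf_norm F hF a
  have hker : LinearMap.ker ℓ₀ ≤ LinearMap.ker ℓ₁ := by
    intro y hy
    rw [LinearMap.mem_ker] at hy ⊢
    rw [← norm_eq_zero, hnorm y, hy, norm_zero]
  set R : Submodule 𝕜 B₀ := LinearMap.range ℓ₀ with hR
  have hRspan : R = Submodule.span 𝕜 (φ₀ '' S₀) := by
    rw [hR, hℓ₀, Finsupp.range_linearCombination]
    congr 1
    rw [Set.image_eq_range]
  have hdense : Dense (R : Set B₀) := by
    rw [hRspan]
    exact Submodule.dense_iff_topologicalClosure_eq_top.2 hdense₀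
  set q : (({ν // ν ∈ S₀} →₀ 𝕜) ⧸ LinearMap.ker ℓ₀) →ₗ[𝕜] B₁ :=
    Submodule.liftQ _ ℓ₁ hker with hq
  set e : (({ν // ν ∈ S₀} →₀ 𝕜) ⧸ LinearMap.ker ℓ₀) ≃ₗ[𝕜] R := ℓ₀.quotKerEquivRange with he
  set g : R →ₗ[𝕜] B₁ := q.comp (e.symm : R →ₗ[𝕜] _) with hg
  have hgval : ∀ (y : {ν // ν ∈ S₀} →₀ 𝕜) (h : ℓ₀ y ∈ R), g ⟨ℓ₀ y, h⟩ = ℓ₁ y := by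
    intro y h
    have h1 : (⟨ℓ₀ y, h⟩ : R) = e (Submodule.Quotient.mk y) :=
      Subtype.ext (ℓ₀.quotKerEquivRange_apply_mk y).symm
    rw [hg, h1]
    simp only [LinearMap.comp_apply, LinearEquiv.coe_coe, LinearEquiv.symm_apply_apply]
    rw [hq, Submodule.liftQ_apply]
  have hgiso : ∀ x : R, ‖g x‖ = ‖x‖ := by
    intro x
    obtain ⟨y, hy⟩ := x.2
    have hx : x = ⟨ℓ₀ y, ⟨y, rfl⟩⟩ := Subtype.ext hy.symm
    rw [hx, hgval y ⟨y, rfl⟩, hnorm y]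
    rfl
  set G : R →ₗᵢ[𝕜] B₁ := ⟨g, hgiso⟩ with hG
  have hdr : DenseRange (⇑(R.subtypeL)) := by
    have hr : Set.range (⇑R.subtypeL) = (R : Set B₀) := Subtype.range_coe
    unfold DenseRange
    rw [hr]
    exact hdense
  have hui : IsUniformInducing (⇑(R.subtypeL)) := isometry_subtype_coe.isUniformInducing
  set T' : B₀ →L[𝕜] B₁ := G.toContinuousLinearMap.extend R.subtypeL with hT'
  have hT'ext : ∀ x : R, T' (x : B₀) = G x := fun x =>
    G.toContinuousLinearMap.extend_eq hdr hui x
  have hT'φ : ∀ ν ∈ S₀, T' (φ₀ ν) = φ₁ (f ν) := by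
    intro ν hν
    have hval : φ₀ ν = ℓ₀ (Finsupp.single ⟨ν, hν⟩ 1) := by
      rw [hℓ₀, Finsupp.linearCombination_single, one_smul]
    have hmem : φ₀ ν ∈ R := ⟨Finsupp.single ⟨ν, hν⟩ 1, hval.symm⟩
    have := hT'ext ⟨φ₀ ν, hmem⟩
    rw [this]
    have h2 : (⟨φ₀ ν, hmem⟩ : R) = ⟨ℓ₀ (Finsupp.single ⟨ν, hν⟩ 1), LinearMap.mem_range_self ℓ₀ _⟩ :=
      Subtype.ext hval
    rw [hG]
    show g _ = _
    rw [h2, hgval]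
    rw [hℓ₁, Finsupp.linearCombination_single, one_smul]
  have hT'iso : ∀ x : B₀, ‖T' x‖ = ‖x‖ := by
    have hcl : IsClosed {x : B₀ | ‖T' x‖ = ‖x‖} :=
      isClosed_eq T'.continuous.norm continuous_norm
    have hsub : (R : Set B₀) ⊆ {x : B₀ | ‖T' x‖ = ‖x‖} := by
      intro x hx
      have h1 := hT'ext ⟨x, hx⟩
      simp only [Set.mem_setOf_eq]
      rw [h1]
      exact hgiso ⟨x, hx⟩
    exact fun x => closure_minimal hsub hcl (hdense x)
  set T₀ : B₀ →ₗᵢ[𝕜] B₁ := ⟨(T' : B₀ →ₗ[𝕜] B₁), hT'iso⟩ with hT₀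
  have hT₀φ : ∀ ν ∈ S₀, T₀ (φ₀ ν) = φ₁ (f ν) := hT'φ
  have hclosedr : IsClosed (Set.range ⇑T₀) :=
    T₀.isometry.isClosedEmbedding.isClosed_range
  have hsurj : Function.Surjective ⇑T₀ := by
    have hsub1 : φ₁ '' S₁ ⊆ Set.range ⇑T₀ := by
      rintro _ ⟨τ, hτ, rfl⟩
      obtain ⟨ν, hν, rfl⟩ := hf_surj τ hτ
      exact ⟨φ₀ ν, hT₀φ ν hν⟩
    have hle : Submodule.span 𝕜 (φ₁ '' S₁) ≤ LinearMap.range T₀.toLinearMap := by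
      rw [Submodule.span_le]
      intro x hx
      obtain ⟨z, hz⟩ := hsub1 hx
      exact ⟨z, hz⟩
    have hcl2 : IsClosed ((LinearMap.range T₀.toLinearMap : Submodule 𝕜 B₁) : Set B₁) := by
      have hh : ((LinearMap.range T₀.toLinearMap : Submodule 𝕜 B₁) : Set B₁)
          = Set.range ⇑T₀ := LinearMap.coe_range _
      rw [hh]
      exact hclosedr
    have htop := Submodule.topologicalClosure_minimal _ hle hcl2
    rw [hdense₁] at htop
    intro x
    obtain ⟨z, hz⟩ := htop (Submodule.mem_top (x := x))
    exact ⟨z, hz⟩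
  set T : B₀ ≃ₗᵢ[𝕜] B₁ := LinearIsometryEquiv.ofSurjective T₀ hsurj with hT
  have hTco : ∀ x, T x = T₀ x := fun x => rfl
  have hTφ : ∀ ν ∈ S₀, T (φ₀ ν) = φ₁ (f ν) := fun ν hν => by
    rw [hTco]
    exact hT₀φ ν hν
  refine ⟨T, hTφ, ?_⟩
  intro U hU
  have key : ∀ x, U x = T x := by
    set E : Submodule 𝕜 B₀ :=
      LinearMap.eqLocus U.toLinearIsometry.toLinearMap T.toLinearIsometry.toLinearMap with hE
    have hEc : IsClosed (E : Set B₀) := by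
      have hh : (E : Set B₀) = {x | U x = T x} := by
        ext x
        exact Iff.rfl
      rw [hh]
      exact isClosed_eq U.continuous T.continuous
    have hsp : Submodule.span 𝕜 (φ₀ '' S₀) ≤ E := by
      rw [Submodule.span_le]
      rintro _ ⟨ν, hν, rfl⟩
      show U (φ₀ ν) = T (φ₀ ν)
      rw [hU ν hν, hTφ ν hν]
    have htop := Submodule.topologicalClosure_minimal _ hsp hEc
    rw [hdense₀] at htop
    intro x
    exact htop (Submodule.mem_top (x := x))
  exact LinearIsometryEquiv.ext key
end

section
/- If f₀, f₁ ∈ L^p(Ω; 𝔽), then there exist disjointly supported g₀, g₁ ∈ L^p(Ω; 𝔽) such that max{‖g₀ - f₀‖_p, ‖g₁ - f₁‖_p} ≤ ‖min(|f₀|, |f₁|)‖_p. -/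
open MeasureTheory

/-- any two `L^p` functions can be approximated by disjointly
supported ones, with error controlled by the norm of the pointwise minimum of
their moduli. -/
theorem stmt3 {X : Type*} [MeasurableSpace X] (μ : Measure X)
    {𝕜 : Type*} [RCLike 𝕜] (p : ℝ) (hp : 1 ≤ p)
    (f₀ f₁ : X → 𝕜)
    (hf₀ : MemLp f₀ (ENNReal.ofReal p) μ) (hf₁ : MemLp f₁ (ENNReal.ofReal p) μ) :
    ∃ g₀ g₁ : X → 𝕜,
      MemLp g₀ (ENNReal.ofReal p) μ ∧ MemLp g₁ (ENNReal.ofReal p) μ ∧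
      (∀ᵐ t ∂μ, g₀ t * g₁ t = 0) ∧
      max (eLpNorm (g₀ - f₀) (ENNReal.ofReal p) μ)
          (eLpNorm (g₁ - f₁) (ENNReal.ofReal p) μ)
        ≤ eLpNorm (fun t => min ‖f₀ t‖ ‖f₁ t‖) (ENNReal.ofReal p) μ := by
  set q := ENNReal.ofReal p
  set F₀ := hf₀.1.mk f₀ with hF₀def
  set F₁ := hf₁.1.mk f₁ with hF₁def
  have hm₀ : StronglyMeasurable F₀ := hf₀.1.stronglyMeasurable_mk
  have hm₁ : StronglyMeasurable F₁ := hf₁.1.stronglyMeasurable_mk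
  have he₀ : f₀ =ᵐ[μ] F₀ := hf₀.1.ae_eq_mk
  have he₁ : f₁ =ᵐ[μ] F₁ := hf₁.1.ae_eq_mk
  have hF₀ : MemLp F₀ q μ := hf₀.ae_eq he₀
  have hF₁ : MemLp F₁ q μ := hf₁.ae_eq he₁
  set g₀ : X → 𝕜 := fun x => if ‖F₁ x‖ < ‖F₀ x‖ then F₀ x else 0 with hg₀def
  set g₁ : X → 𝕜 := fun x => if ‖F₁ x‖ < ‖F₀ x‖ then 0 else F₁ x with hg₁def
  have hmeas : MeasurableSet {x | ‖F₁ x‖ < ‖F₀ x‖} :=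
    measurableSet_lt hm₁.measurable.norm hm₀.measurable.norm
  have hsm₀ : StronglyMeasurable g₀ := StronglyMeasurable.ite hmeas hm₀ stronglyMeasurable_const
  have hsm₁ : StronglyMeasurable g₁ := StronglyMeasurable.ite hmeas stronglyMeasurable_const hm₁
  refine ⟨g₀, g₁, ?_, ?_, ?_, ?_⟩
  · refine hF₀.of_le hsm₀.aestronglyMeasurable (Filter.Eventually.of_forall fun x => ?_)
    simp only [hg₀def]
    split <;> simp
  · refine hF₁.of_le hsm₁.aestronglyMeasurable (Filter.Eventually.of_forall fun x => ?_)
    simp only [hg₁def]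
    split <;> simp
  · refine Filter.Eventually.of_forall fun x => ?_
    simp only [hg₀def, hg₁def]
    split <;> simp
  · have key : ∀ (h : X → 𝕜) (F : X → 𝕜), (∀ x, ‖h x - F x‖ ≤ min ‖F₀ x‖ ‖F₁ x‖) →
        eLpNorm (h - F) q μ ≤ eLpNorm (fun t => min ‖f₀ t‖ ‖f₁ t‖) q μ := by
      intro h F hb
      have : eLpNorm (fun t => min ‖f₀ t‖ ‖f₁ t‖) q μ
          = eLpNorm (fun t => min ‖F₀ t‖ ‖F₁ t‖) q μ := by
        refine eLpNorm_congr_ae ?_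
        filter_upwards [he₀, he₁] with x h0 h1
        rw [h0, h1]
      rw [this]
      refine eLpNorm_mono fun x => ?_
      refine (hb x).trans ?_
      have : 0 ≤ min ‖F₀ x‖ ‖F₁ x‖ := le_min (norm_nonneg _) (norm_nonneg _)
      rw [Real.norm_eq_abs, abs_of_nonneg this]
    refine max_le ?_ ?_
    · have : eLpNorm (g₀ - f₀) q μ = eLpNorm (g₀ - F₀) q μ := by
        refine eLpNorm_congr_ae ?_
        filter_upwards [he₀] with x h0
        simp [h0]
      rw [this]
      refine key g₀ F₀ fun x => ?_
      simp only [hg₀def]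
      split_ifs with h
      · simp [le_min (norm_nonneg _) (norm_nonneg _)]
      · push_neg at h
        simp [min_eq_left h]
    · have : eLpNorm (g₁ - f₁) q μ = eLpNorm (g₁ - F₁) q μ := by
        refine eLpNorm_congr_ae ?_
        filter_upwards [he₁] with x h1
        simp [h1]
      rw [this]
      refine key g₁ F₁ fun x => ?_
      simp only [hg₁def]
      split_ifs with h
      · simp [min_eq_right h.le]
      · simp [le_min (norm_nonneg _) (norm_nonneg _)]
end

section
/- Let ℬ be a Banach lattice and ‖·‖ a norm on its complexification ℬ_ℂ. Then (ℬ_ℂ, ‖·‖) is an abstract complex L^p space if and only if for all v₀, v₁ ∈ ℬ and all complex α, β: inf over u₀, u₁ ∈ ℬ of max{ G₀, G₁, G₂ } = 0, where G₀ = max(0, max{‖v₀-u₀‖_ℬ, ‖v₁-u₁‖_ℬ} - ‖|v₀| ∧ |v₁|‖_ℬ), G₁ = |‖α(u₀+i0)+β(u₁+i0)‖^p - |α|^p‖u₀‖_ℬ^p - |β|^p‖u₁‖_ℬ^p|, and G₂ = |‖v₀+i0‖ - ‖v₀‖_ℬ|. -/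
section aux
variable {B : Type} [NormedAddCommGroup B] [Lattice B] [HasSolidNorm B] [IsOrderedAddMonoid B]

private lemma aux_sub_posPart (x d : B) : x - (x - d)⁺ = x ⊓ d := by
  have h : x ⊓ d + (x ⊔ d) = x + d := inf_add_sup x d
  have h2 : (x - d) ⊔ 0 = (x ⊔ d) - d := by rw [sup_sub]; simp
  rw [posPart_def, h2]
  have h3 : x ⊓ d = x + d - (x ⊔ d) := by rw [← h]; abel
  rw [h3]; abel

private lemma aux_abs_sub_le {s t d : B} (hs : s ≤ d) (ht : t ≤ d)
    (hs0 : 0 ≤ s) (ht0 : 0 ≤ t) : |s - t| ≤ d := by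
  have : |s - t| = (s - t) ⊔ (-(s - t)) := rfl
  rw [this]
  refine sup_le ?_ ?_
  · exact le_trans (by simpa using sub_le_self s ht0) hs
  · have : -(s - t) = t - s := by abel
    rw [this]
    exact le_trans (sub_le_self t hs0) ht

end aux


/-- characterization of abstract complex `L^p` spaces by a
continuous-logic style condition.  `E` is the complexification of the abstract
real `L^p` space `B`, with `j v = v + i·0` the (linear) real embedding. -/
theorem stmt11 (p : ℝ) (hp : 1 ≤ p)
    {B E : Type} [NormedAddCommGroup B] [Lattice B] [HasSolidNorm B] [IsOrderedAddMonoid B] [NormedSpace ℝ B] [CompleteSpace B]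
    -- `B` is an abstract real `L^p` space
    (hB : ∀ x y : B, |x| ⊓ |y| = 0 → ‖x + y‖ ^ p = ‖x‖ ^ p + ‖y‖ ^ p)
    [NormedAddCommGroup E] [NormedSpace ℂ E] [CompleteSpace E]
    (j : B →ₗ[ℝ] E)
    (hcompl : ∀ w : E, ∃! vv : B × B, w = j vv.1 + Complex.I • j vv.2) :
    -- `(E, ‖·‖)` is an abstract complex `L^p` space ...
    ((∀ v : B, ‖j v‖ = ‖v‖) ∧
      ∀ v₀ v₁ : B, |v₀| ⊓ |v₁| = 0 → ∀ α β : ℂ,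
        ‖α • j v₀ + β • j v₁‖ ^ p = ‖α‖ ^ p * ‖v₀‖ ^ p + ‖β‖ ^ p * ‖v₁‖ ^ p)
    ↔
    -- ... iff for all `v₀, v₁, α, β` the infimum of `max {G₀, G₁, G₂}` is `0`
    (∀ v₀ v₁ : B, ∀ α β : ℂ,
      (⨅ u : B × B,
        max (max 0 (max ‖v₀ - u.1‖ ‖v₁ - u.2‖ - ‖|v₀| ⊓ |v₁|‖))
          (max
            |‖α • j u.1 + β • j u.2‖ ^ p - ‖α‖ ^ p * ‖u.1‖ ^ p - ‖β‖ ^ p * ‖u.2‖ ^ p|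
            |‖j v₀‖ - ‖v₀‖|)) = 0) := by
  constructor
  · rintro ⟨h1, h2⟩ v₀ v₁ α β
    set d : B := |v₀| ⊓ |v₁| with hd
    have hd0 : (0:B) ≤ d := le_inf (abs_nonneg _) (abs_nonneg _)
    set u₀ : B := (v₀⁺ - d)⁺ - (v₀⁻ - d)⁺ with hu₀
    set u₁ : B := (v₁⁺ - d)⁺ - (v₁⁻ - d)⁺ with hu₁
    -- the difference bound
    have hdiff : ∀ v : B, v - ((v⁺ - d)⁺ - (v⁻ - d)⁺) = v⁺ ⊓ d - v⁻ ⊓ d := by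
      intro v
      have : v - ((v⁺ - d)⁺ - (v⁻ - d)⁺)
          = (v⁺ - (v⁺ - d)⁺) - (v⁻ - (v⁻ - d)⁺) := by
        rw [show (v⁺ - (v⁺ - d)⁺) - (v⁻ - (v⁻ - d)⁺)
            = (v⁺ - v⁻) - ((v⁺ - d)⁺ - (v⁻ - d)⁺) by abel, posPart_sub_negPart]
      rw [this, aux_sub_posPart, aux_sub_posPart]
    have hnorm : ∀ v : B, ‖v - ((v⁺ - d)⁺ - (v⁻ - d)⁺)‖ ≤ ‖d‖ := by
      intro v
      refine HasSolidNorm.solid ?_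
      rw [hdiff v, abs_of_nonneg hd0]
      exact aux_abs_sub_le inf_le_right inf_le_right
        (le_inf (posPart_nonneg _) hd0) (le_inf (negPart_nonneg _) hd0)
    -- disjointness of u₀ u₁
    have habs : ∀ v : B, d ≤ |v| → |(v⁺ - d)⁺ - (v⁻ - d)⁺| ≤ |v| - d := by
      intro v hv
      have hP : (v⁺ - d)⁺ ≤ |v| - d := by
        rw [posPart_def]
        refine sup_le (sub_le_sub_right ?_ d) (sub_nonneg.mpr hv)
        rw [← posPart_add_negPart v]
        exact le_add_of_nonneg_right (negPart_nonneg _)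
      have hN : (v⁻ - d)⁺ ≤ |v| - d := by
        rw [posPart_def]
        refine sup_le (sub_le_sub_right ?_ d) (sub_nonneg.mpr hv)
        rw [← posPart_add_negPart v]
        exact le_add_of_nonneg_left (posPart_nonneg _)
      have h0P : (0:B) ≤ (v⁺ - d)⁺ := posPart_nonneg _
      have h0N : (0:B) ≤ (v⁻ - d)⁺ := posPart_nonneg _
      exact aux_abs_sub_le hP hN h0P h0N
    have hdisjU : |u₀| ⊓ |u₁| = 0 := by
      refine le_antisymm ?_ (le_inf (abs_nonneg _) (abs_nonneg _))
      calc |u₀| ⊓ |u₁| ≤ (|v₀| - d) ⊓ (|v₁| - d) :=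
            inf_le_inf (habs v₀ inf_le_left) (habs v₁ inf_le_right)
        _ = (|v₀| ⊓ |v₁|) - d := (inf_sub _ _ _).symm
        _ = 0 := by rw [← hd, sub_self]
    -- value at (u₀, u₁) is 0
    have hval : (fun u : B × B =>
        max (max 0 (max ‖v₀ - u.1‖ ‖v₁ - u.2‖ - ‖|v₀| ⊓ |v₁|‖))
          (max
            |‖α • j u.1 + β • j u.2‖ ^ p - ‖α‖ ^ p * ‖u.1‖ ^ p - ‖β‖ ^ p * ‖u.2‖ ^ p|
            |‖j v₀‖ - ‖v₀‖|)) (u₀, u₁) = 0 := by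
      have hG0 : max ‖v₀ - u₀‖ ‖v₁ - u₁‖ - ‖|v₀| ⊓ |v₁|‖ ≤ 0 := by
        rw [← hd]
        exact sub_nonpos.mpr (max_le (hnorm v₀) (hnorm v₁))
      have hG1 : ‖α • j u₀ + β • j u₁‖ ^ p - ‖α‖ ^ p * ‖u₀‖ ^ p - ‖β‖ ^ p * ‖u₁‖ ^ p = 0 := by
        rw [h2 u₀ u₁ hdisjU α β]; ring
      have hG2 : ‖j v₀‖ - ‖v₀‖ = 0 := by rw [h1 v₀, sub_self]
      simp only [hG1, hG2, abs_zero, max_self, max_eq_left hG0, max_self]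
    refine le_antisymm ?_ ?_
    · have hbdd : BddBelow (Set.range (fun u : B × B =>
        max (max 0 (max ‖v₀ - u.1‖ ‖v₁ - u.2‖ - ‖|v₀| ⊓ |v₁|‖))
          (max
            |‖α • j u.1 + β • j u.2‖ ^ p - ‖α‖ ^ p * ‖u.1‖ ^ p - ‖β‖ ^ p * ‖u.2‖ ^ p|
            |‖j v₀‖ - ‖v₀‖|))) := by
        refine ⟨0, ?_⟩
        rintro x ⟨u, rfl⟩
        exact le_max_of_le_left (le_max_left _ _)
      exact le_of_le_of_eq (ciInf_le hbdd (u₀, u₁)) hval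
    · exact le_ciInf fun u => le_max_of_le_left (le_max_left _ _)
  · intro h
    have hiso : ∀ v : B, ‖j v‖ = ‖v‖ := by
      intro v
      have hle : |‖j v‖ - ‖v‖| ≤ 0 := by
        rw [← h v v 1 1]
        exact le_ciInf fun u => le_max_of_le_right (le_max_right _ _)
      have := abs_eq_zero.mp (le_antisymm hle (abs_nonneg _))
      linarith
    refine ⟨hiso, ?_⟩
    intro v₀ v₁ hdisj α β
    have hj : Isometry j := AddMonoidHomClass.isometry_of_norm j hiso
    have key : ∀ n : ℕ, ∃ u : B × B, ‖v₀ - u.1‖ < 1/(n+1) ∧ ‖v₁ - u.2‖ < 1/(n+1) ∧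
        |‖α • j u.1 + β • j u.2‖ ^ p - ‖α‖ ^ p * ‖u.1‖ ^ p - ‖β‖ ^ p * ‖u.2‖ ^ p|
          < 1/(n+1) := by
      intro n
      have hpos : (0:ℝ) < 1/(n+1) := by positivity
      obtain ⟨u, hu⟩ := exists_lt_of_ciInf_lt (lt_of_eq_of_lt (h v₀ v₁ α β) hpos)
      rw [max_lt_iff] at hu
      obtain ⟨hu1, hu2⟩ := hu
      rw [max_lt_iff] at hu1 hu2
      have hnd : ‖|v₀| ⊓ |v₁|‖ = 0 := by rw [hdisj, norm_zero]
      have h3 := hu1.2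
      rw [hnd, sub_zero, max_lt_iff] at h3
      exact ⟨u, h3.1, h3.2, hu2.1⟩
    choose u hu1 hu2 hu3 using key
    have htd : Filter.Tendsto (fun n : ℕ => 1/((n:ℝ)+1)) Filter.atTop (nhds 0) :=
      tendsto_one_div_add_atTop_nhds_zero_nat
    have hlim1 : Filter.Tendsto (fun n => (u n).1) Filter.atTop (nhds v₀) := by
      rw [tendsto_iff_norm_sub_tendsto_zero]
      exact squeeze_zero (fun n => norm_nonneg _)
        (fun n => by rw [norm_sub_rev]; exact (hu1 n).le) htd
    have hlim2 : Filter.Tendsto (fun n => (u n).2) Filter.atTop (nhds v₁) := by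
      rw [tendsto_iff_norm_sub_tendsto_zero]
      exact squeeze_zero (fun n => norm_nonneg _)
        (fun n => by rw [norm_sub_rev]; exact (hu2 n).le) htd
    have hrp : Continuous fun t : ℝ => t ^ p := Real.continuous_rpow_const (by linarith)
    set F : B × B → ℝ := fun w =>
      |‖α • j w.1 + β • j w.2‖ ^ p - ‖α‖ ^ p * ‖w.1‖ ^ p - ‖β‖ ^ p * ‖w.2‖ ^ p| with hF
    have hFc : Continuous F := by
      have c1 : Continuous fun w : B × B => ‖α • j w.1 + β • j w.2‖ ^ p :=
        hrp.comp ((((hj.continuous.comp continuous_fst).const_smul α).add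
          ((hj.continuous.comp continuous_snd).const_smul β)).norm)
      have c2 : Continuous fun w : B × B => ‖α‖ ^ p * ‖w.1‖ ^ p :=
        continuous_const.mul (hrp.comp (continuous_norm.comp continuous_fst))
      have c3 : Continuous fun w : B × B => ‖β‖ ^ p * ‖w.2‖ ^ p :=
        continuous_const.mul (hrp.comp (continuous_norm.comp continuous_snd))
      exact ((c1.sub c2).sub c3).abs
    have hlimF : Filter.Tendsto (fun n => F (u n)) Filter.atTop (nhds (F (v₀, v₁))) :=
      (hFc.continuousAt).tendsto.comp (hlim1.prodMk_nhds hlim2)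
    have hlimF0 : Filter.Tendsto (fun n => F (u n)) Filter.atTop (nhds 0) :=
      squeeze_zero (fun n => abs_nonneg _) (fun n => (hu3 n).le) htd
    have hF0 : F (v₀, v₁) = 0 := tendsto_nhds_unique hlimF hlimF0
    rw [hF] at hF0
    simp only [abs_eq_zero] at hF0
    linarith
end

section
/- Let 1 ≤ r < ∞ and suppose ℬ is a Banach space ( over ℝ) admitting an L^r-formal disintegration φ : {0,1}* → ℬ indexed by the full binary tree such that ‖φ(σ)‖ = 2^{-|σ|/r} for all σ. Then ℬ is isometrically isomorphic to L^r([0,1]; ℝ). -/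
open MeasureTheory

set_option linter.unusedSectionVars false
set_option linter.unusedVariables false

namespace Stmt14

open BoundedContinuousFunction

def val : List Bool → ℕ
  | [] => 0
  | b :: σ => (cond b 1 0) * 2 ^ σ.length + val σ

lemma val_lt (σ : List Bool) : val σ < 2 ^ σ.length := by
  induction σ with
  | nil => simp [val]
  | cons b σ ih =>
    simp only [val, List.length_cons, pow_succ]
    cases b <;> simp <;> omega

lemma val_append (σ : List Bool) (b : Bool) :
    val (σ ++ [b]) = 2 * val σ + cond b 1 0 := by
  induction σ with
  | nil => cases b <;> simp [val]
  | cons c σ ih =>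
    cases c <;> cases b <;>
      simp_all [List.cons_append, val, pow_succ, List.length_append] <;> ring

lemma val_injOn {σ τ : List Bool} (h : σ.length = τ.length) (hv : val σ = val τ) : σ = τ := by
  induction σ generalizing τ with
  | nil => cases τ with
    | nil => rfl
    | cons c τ => simp at h
  | cons b σ ih =>
    cases τ with
    | nil => simp at h
    | cons c τ =>
      simp only [List.length_cons, Nat.succ_inj] at h
      have h2σ := val_lt σ
      have h2τ := val_lt τ
      simp only [val] at hv
      rw [h] at h2σ
      have hbc : b = c := by
        cases b <;> cases c <;> simp_all <;> omega
      subst hbc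
      have : val σ = val τ := by cases b <;> simp_all
      rw [ih h this]

/-- level-n strings -/

def Lev (n : ℕ) : Finset (List Bool) :=
  (Finset.univ : Finset (Fin n → Bool)).image List.ofFn

lemma mem_Lev {n : ℕ} {τ : List Bool} : τ ∈ Lev n ↔ τ.length = n := by
  constructor
  · rintro h
    simp only [Lev, Finset.mem_image] at h
    obtain ⟨v, -, rfl⟩ := h
    simp
  · rintro rfl
    simp only [Lev, Finset.mem_image]
    exact ⟨fun i => τ[(i : ℕ)], Finset.mem_univ _, List.ofFn_getElem (xs := τ)⟩

/-- dyadic interval -/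

def dyI (σ : List Bool) : Set ℝ :=
  Set.Ico ((val σ : ℝ) / 2 ^ σ.length) (((val σ : ℝ) + 1) / 2 ^ σ.length)

lemma dyI_subset (σ : List Bool) : dyI σ ⊆ Set.Ico (0:ℝ) 1 := by
  intro x hx
  obtain ⟨h1, h2⟩ := hx
  have hpos : (0:ℝ) < 2 ^ σ.length := by positivity
  constructor
  · exact le_trans (by positivity) h1
  · refine lt_of_lt_of_le h2 ?_
    rw [div_le_one hpos]
    have := val_lt σ
    have : (val σ : ℝ) + 1 ≤ 2 ^ σ.length := by exact_mod_cast this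
    simpa using this

lemma dyI_split (σ : List Bool) :
    dyI σ = dyI (σ ++ [false]) ∪ dyI (σ ++ [true]) ∧
      Disjoint (dyI (σ ++ [false])) (dyI (σ ++ [true])) := by
  have hlen : ∀ b, (σ ++ [b]).length = σ.length + 1 := by simp
  have hvf : val (σ ++ [false]) = 2 * val σ := by simp [val_append]
  have hvt : val (σ ++ [true]) = 2 * val σ + 1 := by simp [val_append]
  have hpos : (0:ℝ) < 2 ^ σ.length := by positivity
  have e1 : ((val (σ ++ [false]) : ℝ)) / 2 ^ (σ ++ [false]).length = (val σ : ℝ) / 2 ^ σ.length := by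
    rw [hvf, hlen]; push_cast; rw [pow_succ]; field_simp
  have e2 : ((val (σ ++ [false]) : ℝ) + 1) / 2 ^ (σ ++ [false]).length
      = ((val (σ ++ [true]) : ℝ)) / 2 ^ (σ ++ [true]).length := by
    rw [hvf, hvt, hlen, hlen]; push_cast; ring_nf
  have e3 : ((val (σ ++ [true]) : ℝ) + 1) / 2 ^ (σ ++ [true]).length
      = ((val σ : ℝ) + 1) / 2 ^ σ.length := by
    rw [hvt, hlen]; push_cast; rw [pow_succ]; field_simp; ring
  have mono1 : ((val (σ ++ [false]) : ℝ)) / 2 ^ (σ ++ [false]).length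
      ≤ ((val (σ ++ [false]) : ℝ) + 1) / 2 ^ (σ ++ [false]).length := by gcongr; linarith
  have mono2 : ((val (σ ++ [false]) : ℝ) + 1) / 2 ^ (σ ++ [false]).length
      ≤ ((val (σ ++ [true]) : ℝ) + 1) / 2 ^ (σ ++ [true]).length := by
    rw [hlen, hlen]
    gcongr
    have h1 : val (σ ++ [false]) ≤ val (σ ++ [true]) := by rw [hvf, hvt]; omega
    have : (val (σ ++ [false]) : ℝ) ≤ val (σ ++ [true]) := by exact_mod_cast h1
    linarith
  constructor
  · rw [dyI, dyI, dyI, e1, e2, e3]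
    rw [Set.Ico_union_Ico_eq_Ico]
    · rw [← e1, ← e2]; exact mono1
    · rw [← e2, ← e3]; exact mono2
  · rw [dyI, dyI, Set.Ico_disjoint_Ico]
    exact le_trans (min_le_left _ _) (le_trans (le_of_eq e2) (le_max_right _ _))

lemma dyI_disjoint {σ τ : List Bool} (hl : σ.length = τ.length) (hne : σ ≠ τ) :
    Disjoint (dyI σ) (dyI τ) := by
  have hv : val σ ≠ val τ := fun h => hne (val_injOn hl h)
  rw [dyI, dyI, ← hl, Set.Ico_disjoint_Ico]
  rcases lt_or_gt_of_ne hv with h | h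
  · have key : ((val σ : ℝ) + 1) / 2 ^ σ.length ≤ (val τ : ℝ) / 2 ^ σ.length := by
      gcongr
      have : val σ + 1 ≤ val τ := h
      exact_mod_cast this
    exact le_trans (min_le_left _ _) (le_trans key (le_max_right _ _))
  · have key : ((val τ : ℝ) + 1) / 2 ^ σ.length ≤ (val σ : ℝ) / 2 ^ σ.length := by
      gcongr
      have : val τ + 1 ≤ val σ := h
      exact_mod_cast this
    exact le_trans (min_le_right _ _) (le_trans key (le_max_left _ _))

noncomputable abbrev μ01 : Measure ℝ := volume.restrict (Set.Icc (0:ℝ) 1)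

lemma measurable_dyI (σ : List Bool) : MeasurableSet (dyI σ) := measurableSet_Ico

lemma μ_dyI (σ : List Bool) : μ01 (dyI σ) = ENNReal.ofReal (1 / 2 ^ σ.length) := by
  rw [μ01, Measure.restrict_apply (measurable_dyI σ),
    Set.inter_eq_left.mpr ((dyI_subset σ).trans (Set.Ico_subset_Icc_self)), dyI, Real.volume_Ico]
  congr 1
  field_simp
  ring

lemma μ_dyI_ne_top (σ : List Bool) : μ01 (dyI σ) ≠ ⊤ := by
  rw [μ_dyI]; exact ENNReal.ofReal_ne_top

noncomputable def ψ (p : ENNReal) (σ : List Bool) : Lp ℝ p μ01 :=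
  indicatorConstLp p (measurable_dyI σ) (μ_dyI_ne_top σ) (1 : ℝ)

lemma ψ_sum (p : ENNReal) (σ : List Bool) :
    ψ p σ = ψ p (σ ++ [false]) + ψ p (σ ++ [true]) := by
  obtain ⟨hu, hd⟩ := dyI_split σ
  rw [ψ, ψ, ψ, ← indicatorConstLp_disjoint_union (measurable_dyI _) (measurable_dyI _)
    (μ_dyI_ne_top _) (μ_dyI_ne_top _) hd]
  simp only [indicatorConstLp]
  apply MemLp.toLp_congr
  rw [hu]

lemma Lev_zero : Lev 0 = {[]} := by
  ext τ; simp [mem_Lev, List.length_eq_zero_iff]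

lemma sum_Lev_succ {M : Type*} [AddCommMonoid M] (g : List Bool → M) (k : ℕ) :
    ∑ w ∈ Lev (k + 1), g w = ∑ t ∈ Lev k, (g (false :: t) + g (true :: t)) := by
  have h1 : ∑ w ∈ Lev (k + 1), g w
      = ∑ p ∈ (Finset.univ : Finset Bool) ×ˢ Lev k, g (p.1 :: p.2) := by
    refine Finset.sum_nbij' (fun w => (w.headI, w.tail)) (fun p => p.1 :: p.2) ?_ ?_ ?_ ?_ ?_
    · intro w hw
      rw [mem_Lev] at hw
      refine Finset.mem_product.mpr ⟨Finset.mem_univ _, mem_Lev.mpr ?_⟩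
      rw [List.length_tail, hw]
      omega
    · intro p hp
      simp only [Finset.mem_product, Finset.mem_univ, true_and, mem_Lev] at hp ⊢
      simp [hp]
    · intro w hw
      rw [mem_Lev] at hw
      cases w with
      | nil => simp at hw
      | cons b t => simp
    · intro p hp; simp
    · intro w hw
      rw [mem_Lev] at hw
      cases w with
      | nil => simp at hw
      | cons b t => simp
  rw [h1, Finset.sum_product, Fintype.sum_bool, ← Finset.sum_add_distrib]
  exact Finset.sum_congr rfl fun t _ => add_comm _ _

lemma sum_Lev_add {M : Type*} [AddCommMonoid M] (g : List Bool → M) (m k : ℕ) :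
    ∑ τ ∈ Lev (m + k), g τ = ∑ τ ∈ Lev m, ∑ w ∈ Lev k, g (τ ++ w) := by
  have h1 : ∑ τ ∈ Lev (m + k), g τ
      = ∑ p ∈ Lev m ×ˢ Lev k, g (p.1 ++ p.2) := by
    refine Finset.sum_nbij' (fun τ => (τ.take m, τ.drop m)) (fun p => p.1 ++ p.2) ?_ ?_ ?_ ?_ ?_
    · intro τ hτ
      rw [mem_Lev] at hτ
      simp only [Finset.mem_product, mem_Lev, List.length_take, List.length_drop, hτ]
      omega
    · intro p hp
      simp only [Finset.mem_product, mem_Lev] at hp ⊢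
      simp [hp.1, hp.2]
    · intro τ hτ; simp
    · intro p hp
      simp only [Finset.mem_product, mem_Lev] at hp
      simp [List.take_left' hp.1, List.drop_left' hp.1]
    · intro τ hτ; simp
  rw [h1, Finset.sum_product]

lemma sum_fiber {M : Type*} [AddCommMonoid M] (g : List Bool → M) (σ : List Bool) (k : ℕ) :
    ∑ τ ∈ Lev (σ.length + k), (if σ <+: τ then g τ else 0) = ∑ w ∈ Lev k, g (σ ++ w) := by
  rw [sum_Lev_add]
  have key : ∀ τ ∈ Lev σ.length,
      (∑ w ∈ Lev k, if σ <+: τ ++ w then g (τ ++ w) else 0)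
      = if τ = σ then ∑ w ∈ Lev k, g (σ ++ w) else 0 := by
    intro τ hτ
    rw [mem_Lev] at hτ
    by_cases hts : τ = σ
    · subst hts
      rw [if_pos rfl]
      exact Finset.sum_congr rfl fun w _ => if_pos (List.prefix_append τ w)
    · rw [if_neg hts]
      refine Finset.sum_eq_zero fun w _ => ?_
      rw [if_neg]
      intro hpre
      have : σ = (τ ++ w).take σ.length := List.prefix_iff_eq_take.mp hpre
      rw [← hτ, List.take_left' rfl] at this
      exact hts this.symm
  rw [Finset.sum_congr rfl key, Finset.sum_ite_eq' (Lev σ.length) σ, if_pos (mem_Lev.mpr rfl)]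

section Module
variable {E : Type*} [AddCommMonoid E] [Module ℝ E]

lemma ref (e : List Bool → E) (he : ∀ σ, e σ = e (σ ++ [false]) + e (σ ++ [true]))
    (k : ℕ) : ∀ σ : List Bool, e σ = ∑ w ∈ Lev k, e (σ ++ w) := by
  induction k with
  | zero => intro σ; simp [Lev_zero]
  | succ k ih =>
    intro σ
    rw [sum_Lev_succ (fun w => e (σ ++ w)) k]
    have : ∀ t : List Bool, ∀ b : Bool, σ ++ (b :: t) = (σ ++ [b]) ++ t := by
      intro t b; simp
    calc e σ = e (σ ++ [false]) + e (σ ++ [true]) := he σ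
    _ = (∑ w ∈ Lev k, e ((σ ++ [false]) ++ w)) + ∑ w ∈ Lev k, e ((σ ++ [true]) ++ w) := by
        rw [← ih (σ ++ [false]), ← ih (σ ++ [true])]
    _ = ∑ t ∈ Lev k, (e (σ ++ (false :: t)) + e (σ ++ (true :: t))) := by
        rw [← Finset.sum_add_distrib]
        exact Finset.sum_congr rfl fun t _ => by rw [this t false, this t true]

/-- canonical coefficients of a finitely supported combination at a given level -/
def coeffs (f : List Bool →₀ ℝ) : List Bool → ℝ :=
  fun τ => ∑ σ ∈ f.support, (if σ <+: τ then f σ else 0)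

lemma rep (e : List Bool → E) (he : ∀ σ, e σ = e (σ ++ [false]) + e (σ ++ [true]))
    (f : List Bool →₀ ℝ) (n : ℕ) (hn : ∀ σ ∈ f.support, σ.length ≤ n) :
    Finsupp.linearCombination ℝ e f = ∑ τ ∈ Lev n, coeffs f τ • e τ := by
  rw [Finsupp.linearCombination_apply, Finsupp.sum]
  have : ∀ τ ∈ Lev n, coeffs f τ • e τ
      = ∑ σ ∈ f.support, (if σ <+: τ then f σ • e τ else 0) := by
    intro τ _
    rw [coeffs, Finset.sum_smul]
    exact Finset.sum_congr rfl fun σ _ => by rw [ite_smul, zero_smul]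
  rw [Finset.sum_congr rfl this, Finset.sum_comm]
  refine Finset.sum_congr rfl fun σ hσ => ?_
  have hlen : σ.length + (n - σ.length) = n := Nat.add_sub_cancel' (hn σ hσ)
  symm
  calc ∑ τ ∈ Lev n, (if σ <+: τ then f σ • e τ else 0)
      = ∑ w ∈ Lev (n - σ.length), f σ • e (σ ++ w) := by
        conv_lhs => rw [← hlen]
        exact sum_fiber (fun τ => f σ • e τ) σ _
    _ = f σ • ∑ w ∈ Lev (n - σ.length), e (σ ++ w) := by rw [Finset.smul_sum]
    _ = f σ • e σ := by rw [← ref e he _ σ]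

end Module

lemma indicator_sum_eq {n : ℕ} {τ : List Bool} (hτ : τ ∈ Lev n) {x : ℝ} (hx : x ∈ dyI τ)
    (c : List Bool → ℝ) :
    ∑ τ' ∈ Lev n, c τ' * Set.indicator (dyI τ') (fun _ => (1:ℝ)) x = c τ := by
  rw [Finset.sum_eq_single_of_mem τ hτ]
  · simp [Set.indicator_of_mem hx]
  · intro τ' h' hne
    have hd := dyI_disjoint ((mem_Lev.mp h').trans (mem_Lev.mp hτ).symm) hne
    rw [Set.indicator_of_notMem (Set.disjoint_right.mp hd hx)]
    ring

lemma Lp_coeFn_sum {ι : Type*} {p : ENNReal} (s : Finset ι) (f : ι → Lp ℝ p μ01) :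
    (↑↑(∑ i ∈ s, f i) : ℝ → ℝ) =ᵐ[μ01] fun x => ∑ i ∈ s, f i x := by
  classical
  induction s using Finset.induction_on with
  | empty => simp only [Finset.sum_empty]; exact Lp.coeFn_zero ℝ p μ01
  | insert j s' hj ih =>
    rw [Finset.sum_insert hj]
    filter_upwards [Lp.coeFn_add (f j) (∑ i ∈ s', f i), ih] with x h1 h2
    rw [h1]
    simp only [Pi.add_apply, h2, Finset.sum_insert hj]

lemma coeFn_step {p : ENNReal} (c : List Bool → ℝ) (n : ℕ) :
    (↑↑(∑ τ ∈ Lev n, c τ • ψ p τ) : ℝ → ℝ)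
      =ᵐ[μ01] fun x => ∑ τ ∈ Lev n, c τ * Set.indicator (dyI τ) (fun _ => (1:ℝ)) x := by
  have h1 := Lp_coeFn_sum (Lev n) (fun τ => c τ • ψ p τ)
  have h2 : ∀ τ ∈ Lev n, (↑↑(c τ • ψ p τ) : ℝ → ℝ)
      =ᵐ[μ01] fun x => c τ * Set.indicator (dyI τ) (fun _ => (1:ℝ)) x := by
    intro τ _
    filter_upwards [Lp.coeFn_smul (c τ) (ψ p τ), indicatorConstLp_coeFn (p := p)
      (hs := measurable_dyI τ) (hμs := μ_dyI_ne_top τ) (c := (1:ℝ))] with x ha hb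
    rw [ha]
    simp only [Pi.smul_apply, smul_eq_mul]
    rw [show (↑↑(ψ p τ) : ℝ → ℝ) x = Set.indicator (dyI τ) (fun _ => (1:ℝ)) x from hb]
  have h3 : ∀ᵐ x ∂μ01, ∀ τ ∈ Lev n, (↑↑(c τ • ψ p τ) : ℝ → ℝ) x
      = c τ * Set.indicator (dyI τ) (fun _ => (1:ℝ)) x :=
    (ae_ball_iff (Finset.countable_toSet _)).mpr h2
  filter_upwards [h1, h3] with x hx1 hx2
  rw [hx1]
  exact Finset.sum_congr rfl hx2

lemma Lp_norm_pow {r : ℝ} (hr : 1 ≤ r) {p : ENNReal} (hp0 : p ≠ 0) (hpt : p ≠ ⊤)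
    (hpr : p.toReal = r) (c : List Bool → ℝ) (n : ℕ) :
    ‖∑ τ ∈ Lev n, c τ • ψ p τ‖ ^ r = ∑ τ ∈ Lev n, |c τ| ^ r * (1 / 2 ^ n) := by
  have hr0 : 0 < r := lt_of_lt_of_le one_pos hr
  set g : ℝ → ℝ := fun x => ∑ τ ∈ Lev n, c τ * Set.indicator (dyI τ) (fun _ => (1:ℝ)) x with hg
  have hnorm : ‖∑ τ ∈ Lev n, c τ • ψ p τ‖ = (eLpNorm g p μ01).toReal := by
    rw [Lp.norm_def, eLpNorm_congr_ae (coeFn_step c n)]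
  -- pointwise identity in ℝ≥0∞
  have hpt2 : ∀ x : ℝ, (‖g x‖₊ : ENNReal) ^ r
      = ∑ τ ∈ Lev n, Set.indicator (dyI τ) (fun _ => (‖c τ‖₊ : ENNReal) ^ r) x := by
    intro x
    by_cases hx : ∃ τ ∈ Lev n, x ∈ dyI τ
    · obtain ⟨τ, hτ, hxτ⟩ := hx
      rw [hg]
      simp only
      rw [indicator_sum_eq hτ hxτ c]
      rw [Finset.sum_eq_single_of_mem τ hτ]
      · rw [Set.indicator_of_mem hxτ]
      · intro τ' h' hne
        have hd := dyI_disjoint ((mem_Lev.mp h').trans (mem_Lev.mp hτ).symm) hne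
        rw [Set.indicator_of_notMem (Set.disjoint_right.mp hd hxτ)]
    · push_neg at hx
      have : g x = 0 := by
        rw [hg]
        exact Finset.sum_eq_zero fun τ hτ => by
          rw [Set.indicator_of_notMem (hx τ hτ)]; ring
      rw [this]
      rw [Finset.sum_eq_zero fun τ hτ => by rw [Set.indicator_of_notMem (hx τ hτ)]]
      simp [ENNReal.zero_rpow_of_pos hr0]
  have helpn : eLpNorm g p μ01
      = (∑ τ ∈ Lev n, (‖c τ‖₊ : ENNReal) ^ r * ENNReal.ofReal (1 / 2 ^ n)) ^ (1/r) := by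
    rw [eLpNorm_eq_lintegral_rpow_enorm_toReal hp0 hpt, hpr]
    congr 1
    calc ∫⁻ x, (‖g x‖₊ : ENNReal) ^ r ∂μ01
        = ∫⁻ x, ∑ τ ∈ Lev n, Set.indicator (dyI τ) (fun _ => (‖c τ‖₊ : ENNReal) ^ r) x ∂μ01 := by
          exact lintegral_congr fun x => hpt2 x
      _ = ∑ τ ∈ Lev n, ∫⁻ x, Set.indicator (dyI τ) (fun _ => (‖c τ‖₊ : ENNReal) ^ r) x ∂μ01 := by
          refine lintegral_finset_sum _ fun τ _ => ?_
          exact Measurable.indicator measurable_const (measurable_dyI τ)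
      _ = ∑ τ ∈ Lev n, (‖c τ‖₊ : ENNReal) ^ r * ENNReal.ofReal (1 / 2 ^ n) := by
          refine Finset.sum_congr rfl fun τ hτ => ?_
          rw [lintegral_indicator (measurable_dyI τ), setLIntegral_const, μ_dyI,
            mem_Lev.mp hτ]
  set X : ENNReal := ∑ τ ∈ Lev n, (‖c τ‖₊ : ENNReal) ^ r * ENNReal.ofReal (1 / 2 ^ n) with hX
  have hXtop : X ≠ ⊤ := by
    rw [hX]
    refine (ENNReal.sum_lt_top.mpr fun τ _ => ?_).ne
    exact ENNReal.mul_lt_top (ENNReal.rpow_lt_top_of_nonneg hr0.le ENNReal.coe_ne_top)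
      ENNReal.ofReal_lt_top
  rw [hnorm, helpn, ← ENNReal.toReal_rpow, ← Real.rpow_mul ENNReal.toReal_nonneg,
    one_div_mul_cancel hr0.ne', Real.rpow_one, hX, ENNReal.toReal_sum
      (fun τ _ => (ENNReal.mul_lt_top (ENNReal.rpow_lt_top_of_nonneg hr0.le ENNReal.coe_ne_top)
        ENNReal.ofReal_lt_top).ne)]
  refine Finset.sum_congr rfl fun τ _ => ?_
  rw [ENNReal.toReal_mul, ← ENNReal.toReal_rpow, ENNReal.coe_toReal, coe_nnnorm,
    Real.norm_eq_abs, ENNReal.toReal_ofReal (by positivity)]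

lemma B_norm_pow {B : Type*} [NormedAddCommGroup B] [NormedSpace ℝ B] {r : ℝ} (hr : 1 ≤ r) (φ : List Bool → B)
    (hsep : ∀ (n : ℕ) (ν : Fin n → List Bool),
      (∀ i j, i ≠ j → ¬ (ν i <+: ν j) ∧ ¬ (ν j <+: ν i)) →
      ∀ a : Fin n → ℝ,
        ‖∑ i, a i • φ (ν i)‖ ^ r = ∑ i, |a i| ^ r * ‖φ (ν i)‖ ^ r)
    (hnorm : ∀ σ : List Bool, ‖φ σ‖ = (2 : ℝ) ^ (-(σ.length : ℝ) / r))
    (c : List Bool → ℝ) (n : ℕ) :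
    ‖∑ τ ∈ Lev n, c τ • φ τ‖ ^ r = ∑ τ ∈ Lev n, |c τ| ^ r * (1 / 2 ^ n) := by
  classical
  have hr0 : 0 < r := lt_of_lt_of_le one_pos hr
  set s := Lev n with hs
  set e := s.equivFin with he
  set ν : Fin s.card → List Bool := fun i => (e.symm i : List Bool) with hν
  have hνlen : ∀ i, (ν i).length = n := fun i => mem_Lev.mp (e.symm i).2
  have hνinj : Function.Injective ν := fun i j hij => e.symm.injective (Subtype.ext hij)
  have hinc : ∀ i j, i ≠ j → ¬ (ν i <+: ν j) ∧ ¬ (ν j <+: ν i) := by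
    intro i j hij
    constructor
    · intro hpre
      exact hij (hνinj (hpre.eq_of_length ((hνlen i).trans (hνlen j).symm)))
    · intro hpre
      exact hij (hνinj (hpre.eq_of_length ((hνlen j).trans (hνlen i).symm)).symm)
  have hφn : ∀ i, ‖φ (ν i)‖ ^ r = 1 / 2 ^ n := by
    intro i
    rw [hnorm, hνlen, ← Real.rpow_natCast (2:ℝ) n, ← Real.rpow_mul (by norm_num : (0:ℝ) ≤ 2),
      div_mul_cancel₀ _ hr0.ne', Real.rpow_neg (by norm_num), one_div]
  have hsum1 : ∑ τ ∈ s, c τ • φ τ = ∑ i, c (ν i) • φ (ν i) := by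
    rw [← Finset.sum_coe_sort s (fun τ => c τ • φ τ)]
    exact (Equiv.sum_comp e.symm (fun z : s => c (z : List Bool) • φ (z : List Bool))).symm
  have hsum2 : ∑ τ ∈ s, |c τ| ^ r * (1 / 2 ^ n) = ∑ i, |c (ν i)| ^ r * (1 / 2 ^ n) := by
    rw [← Finset.sum_coe_sort s (fun τ => |c τ| ^ r * (1 / 2 ^ n))]
    exact (Equiv.sum_comp e.symm
      (fun z : s => |c (z : List Bool)| ^ r * ((1:ℝ) / 2 ^ n))).symm
  rw [hsum1, hsum2, hsep s.card ν hinc (fun i => c (ν i))]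
  refine Finset.sum_congr rfl fun i _ => ?_
  rw [hφn]

lemma covering {x : ℝ} (hx : x ∈ Set.Ico (0:ℝ) 1) (n : ℕ) :
    ∃ τ : List Bool, τ.length = n ∧ x ∈ dyI τ := by
  induction n with
  | zero =>
    refine ⟨[], rfl, ?_⟩
    simpa [dyI, val] using hx
  | succ n ih =>
    obtain ⟨τ, hlen, hxτ⟩ := ih
    obtain ⟨h1, h2⟩ := hxτ
    rw [hlen] at h1 h2
    have hpos : (0:ℝ) < 2 ^ n := by positivity
    have hpos' : (0:ℝ) < 2 ^ (n + 1) := by positivity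
    by_cases hmid : x < (2 * (val τ : ℝ) + 1) / 2 ^ (n + 1)
    · refine ⟨τ ++ [false], by simp [hlen], ?_, ?_⟩
      · rw [val_append]
        simp only [List.length_append, hlen, List.length_cons, List.length_nil, Bool.cond_false]
        push_cast
        rw [div_le_iff₀ hpos', pow_succ]
        rw [div_le_iff₀ hpos] at h1
        nlinarith
      · rw [val_append]
        simp only [List.length_append, hlen, List.length_cons, List.length_nil, Bool.cond_false]
        push_cast
        convert hmid using 2
        exacts [rfl, by ring]
    · push_neg at hmid
      refine ⟨τ ++ [true], by simp [hlen], ?_, ?_⟩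
      · rw [val_append]
        simp only [List.length_append, hlen, List.length_cons, List.length_nil, Bool.cond_true]
        push_cast
        convert hmid using 2 <;> ring
      · rw [val_append]
        simp only [List.length_append, hlen, List.length_cons, List.length_nil, Bool.cond_true]
        push_cast
        rw [lt_div_iff₀ hpos', pow_succ]
        rw [lt_div_iff₀ hpos] at h2
        nlinarith

lemma ae_Ico : ∀ᵐ x ∂μ01, x ∈ Set.Ico (0:ℝ) 1 := by
  rw [ae_iff]
  have h0 : {x : ℝ | ¬ x ∈ Set.Ico (0:ℝ) 1} = (Set.Ico (0:ℝ) 1)ᶜ := rfl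
  rw [h0, μ01, Measure.restrict_apply (measurableSet_Ico.compl)]
  have h1 : (Set.Ico (0:ℝ) 1)ᶜ ∩ Set.Icc (0:ℝ) 1 = {1} := by
    ext y
    simp only [Set.mem_inter_iff, Set.mem_compl_iff, Set.mem_Ico, Set.mem_Icc,
      Set.mem_singleton_iff, not_and, not_lt]
    constructor
    · rintro ⟨h1, h2, h3⟩
      linarith [h1 h2]
    · rintro rfl
      exact ⟨fun _ => le_refl 1, by norm_num, le_refl 1⟩
  rw [h1]
  exact measure_singleton 1

lemma μ01_univ : μ01 Set.univ = 1 := by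
  rw [μ01, Measure.restrict_apply_univ, Real.volume_Icc]
  norm_num

lemma span_psi_dense {r : ℝ} (hr : 1 ≤ r) {p : ENNReal} [Fact (1 ≤ p)] (hp0 : p ≠ 0)
    (hpt : p ≠ ⊤) (hpr : p.toReal = r) :
    Dense ((Submodule.span ℝ (Set.range (ψ p)) : Submodule ℝ (Lp ℝ p μ01)) : Set (Lp ℝ p μ01)) := by
  have hr0 : 0 < r := lt_of_lt_of_le one_pos hr
  set D := ((Submodule.span ℝ (Set.range (ψ p)) : Submodule ℝ (Lp ℝ p μ01)) : Set (Lp ℝ p μ01))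
    with hD
  have key : ∀ g : ℝ →ᵇ ℝ,
      (BoundedContinuousFunction.toLp p μ01 ℝ g : Lp ℝ p μ01) ∈ closure D := by
    intro g
    rw [Metric.mem_closure_iff]
    intro ε hε
    have hc : UniformContinuousOn g (Set.Icc (0:ℝ) 1) :=
      (isCompact_Icc).uniformContinuousOn_of_continuous g.continuous.continuousOn
    rw [Metric.uniformContinuousOn_iff] at hc
    obtain ⟨δ, hδ, hδ'⟩ := hc (ε/2) (by linarith)
    obtain ⟨n, hn⟩ := exists_pow_lt_of_lt_one hδ (by norm_num : (1:ℝ)/2 < 1)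
    set c : List Bool → ℝ := fun τ => g ((val τ : ℝ) / 2 ^ τ.length) with hc'
    set y := ∑ τ ∈ Lev n, c τ • ψ p τ with hy
    have hyD : y ∈ D := by
      refine Submodule.sum_mem _ fun τ _ => Submodule.smul_mem _ _ ?_
      exact Submodule.subset_span (Set.mem_range_self τ)
    refine ⟨y, hyD, ?_⟩
    set step : ℝ → ℝ := fun x => ∑ τ ∈ Lev n, c τ * Set.indicator (dyI τ) (fun _ => (1:ℝ)) x
      with hstep
    have hbound : ∀ᵐ x ∂μ01, ‖((g : ℝ → ℝ) - step) x‖ ≤ ε/2 := by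
      filter_upwards [ae_Ico] with x hx
      obtain ⟨τ, hlen, hxτ⟩ := covering hx n
      have hτ : τ ∈ Lev n := mem_Lev.mpr hlen
      simp only [Pi.sub_apply, hstep]
      rw [indicator_sum_eq hτ hxτ c]
      have hlep : (val τ : ℝ) / 2 ^ τ.length ∈ dyI τ := by
        refine ⟨le_refl _, ?_⟩
        rw [div_lt_div_iff_of_pos_right (by positivity)]
        linarith
      have hx1 : x ∈ Set.Icc (0:ℝ) 1 := Set.Ico_subset_Icc_self hx
      have hx2 : (val τ : ℝ) / 2 ^ τ.length ∈ Set.Icc (0:ℝ) 1 :=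
        Set.Ico_subset_Icc_self (dyI_subset τ hlep)
      have hdist : dist x ((val τ : ℝ) / 2 ^ τ.length) < δ := by
        rw [Real.dist_eq, abs_of_nonneg (by linarith [hxτ.1])]
        have hwidth : ((val τ : ℝ) + 1) / 2 ^ τ.length - (val τ : ℝ) / 2 ^ τ.length
            = (1/2 : ℝ) ^ n := by
          rw [hlen, div_pow, one_pow]
          ring
        have := hxτ.2
        have := hxτ.1
        nlinarith [hn]
      have := hδ' x hx1 _ hx2 hdist
      rw [Real.dist_eq] at this
      rw [hc', Real.norm_eq_abs]
      exact le_of_lt this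
    have hsub : (↑↑(BoundedContinuousFunction.toLp p μ01 ℝ g - y) : ℝ → ℝ)
        =ᵐ[μ01] (g : ℝ → ℝ) - step := by
      filter_upwards [Lp.coeFn_sub (BoundedContinuousFunction.toLp p μ01 ℝ g) y,
        BoundedContinuousFunction.coeFn_toLp p μ01 ℝ g, coeFn_step (p := p) c n] with x e1 e2 e3
      rw [e1]
      simp only [Pi.sub_apply]
      rw [e2, e3]
    have hbnd2 : eLpNorm (↑↑(BoundedContinuousFunction.toLp p μ01 ℝ g - y)) p μ01
        ≤ ENNReal.ofReal (ε/2) := by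
      rw [eLpNorm_congr_ae hsub]
      calc eLpNorm ((g : ℝ → ℝ) - step) p μ01
          ≤ μ01 Set.univ ^ p.toReal⁻¹ * ENNReal.ofReal (ε/2) := eLpNorm_le_of_ae_bound hbound
        _ = ENNReal.ofReal (ε/2) := by rw [μ01_univ, ENNReal.one_rpow, one_mul]
    rw [dist_eq_norm, Lp.norm_def]
    calc (eLpNorm (↑↑(BoundedContinuousFunction.toLp p μ01 ℝ g - y)) p μ01).toReal
        ≤ (ENNReal.ofReal (ε/2)).toReal := ENNReal.toReal_mono ENNReal.ofReal_ne_top hbnd2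
      _ = ε/2 := ENNReal.toReal_ofReal (by linarith)
      _ < ε := by linarith
  have hd := BoundedContinuousFunction.toLp_denseRange ℝ μ01 ℝ hpt
  rw [dense_iff_closure_eq]
  have h1 : Set.range (BoundedContinuousFunction.toLp p μ01 ℝ (E := ℝ)) ⊆ closure D := by
    rintro - ⟨g, rfl⟩; exact key g
  have h2 := closure_minimal h1 isClosed_closure
  rw [hd.closure_eq] at h2
  exact Set.eq_univ_of_univ_subset h2

end Stmt14

open Stmt14 BoundedContinuousFunction in
/-- a real Banach space admitting an `L^r`-formal disintegration
indexed by the full binary tree with `‖φ(σ)‖ = 2^{-|σ|/r}` is isometrically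
isomorphic to `L^r([0,1]; ℝ)`. -/
theorem stmt14 (r : ℝ) (hr : 1 ≤ r) [Fact (1 ≤ ENNReal.ofReal r)]
    {B : Type*} [NormedAddCommGroup B] [NormedSpace ℝ B] [CompleteSpace B]
    (φ : List Bool → B)
    -- summative
    (hsum : ∀ σ : List Bool, φ σ = φ (σ ++ [false]) + φ (σ ++ [true]))
    -- formally `L^r`-separating
    (hsep : ∀ (n : ℕ) (ν : Fin n → List Bool),
      (∀ i j, i ≠ j → ¬ (ν i <+: ν j) ∧ ¬ (ν j <+: ν i)) →
      ∀ a : Fin n → ℝ,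
        ‖∑ i, a i • φ (ν i)‖ ^ r = ∑ i, |a i| ^ r * ‖φ (ν i)‖ ^ r)
    -- never zero
    (hne : ∀ σ : List Bool, φ σ ≠ 0)
    -- linearly dense range
    (hdense : (Submodule.span ℝ (Set.range φ)).topologicalClosure = ⊤)
    -- norms
    (hnorm : ∀ σ : List Bool, ‖φ σ‖ = (2 : ℝ) ^ (-(σ.length : ℝ) / r)) :
    Nonempty
      (B ≃ₗᵢ[ℝ] Lp ℝ (ENNReal.ofReal r) (volume.restrict (Set.Icc (0 : ℝ) 1))) := by
  classical
  set p := ENNReal.ofReal r with hp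
  have hr0 : 0 < r := lt_of_lt_of_le one_pos hr
  have hp0 : p ≠ 0 := by
    rw [hp, Ne, ENNReal.ofReal_eq_zero]
    push_neg
    exact hr0
  have hpt : p ≠ ⊤ := ENNReal.ofReal_ne_top
  have hpr : p.toReal = r := ENNReal.toReal_ofReal hr0.le
  let T : (List Bool →₀ ℝ) →ₗ[ℝ] B := Finsupp.linearCombination ℝ φ
  let S : (List Bool →₀ ℝ) →ₗ[ℝ] Lp ℝ p μ01 := Finsupp.linearCombination ℝ (ψ p)
  have rpow_rinv : ∀ a : ℝ, 0 ≤ a → (a ^ r) ^ (1/r) = a := by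
    intro a ha
    rw [← Real.rpow_mul ha, mul_one_div, div_self hr0.ne', Real.rpow_one]
  have hTS : ∀ f : List Bool →₀ ℝ, ‖T f‖ = ‖S f‖ := by
    intro f
    set n := f.support.sup List.length with hn
    have hsupp : ∀ σ ∈ f.support, σ.length ≤ n := fun σ hσ => Finset.le_sup hσ
    have eT : T f = ∑ τ ∈ Lev n, coeffs f τ • φ τ := rep φ hsum f n hsupp
    have eS : S f = ∑ τ ∈ Lev n, coeffs f τ • ψ p τ := rep (ψ p) (ψ_sum p) f n hsupp
    have h1 := B_norm_pow hr φ hsep hnorm (coeffs f) n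
    have h2 := Lp_norm_pow hr hp0 hpt hpr (coeffs f) n
    have h3 : ‖T f‖ ^ r = ‖S f‖ ^ r := by rw [eT, eS, h1, h2]
    calc ‖T f‖ = (‖T f‖ ^ r) ^ (1/r) := (rpow_rinv _ (norm_nonneg _)).symm
      _ = (‖S f‖ ^ r) ^ (1/r) := by rw [h3]
      _ = ‖S f‖ := rpow_rinv _ (norm_nonneg _)
  have hker : LinearMap.ker T ≤ LinearMap.ker S := by
    intro f hf
    rw [LinearMap.mem_ker] at hf ⊢
    have h := hTS f
    rw [hf, norm_zero] at h
    exact norm_eq_zero.mp h.symm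
  let u : ((List Bool →₀ ℝ) ⧸ LinearMap.ker T) →ₗ[ℝ] Lp ℝ p μ01 :=
    (LinearMap.ker T).liftQ S hker
  let eq1 := T.quotKerEquivRange
  let g : LinearMap.range T →ₗ[ℝ] Lp ℝ p μ01 := u.comp (eq1.symm : _ ≃ₗ[ℝ] _).toLinearMap
  have hgmk : ∀ f : List Bool →₀ ℝ,
      g ⟨T f, LinearMap.mem_range_self T f⟩ = S f := by
    intro f
    have h1 : eq1 (Submodule.Quotient.mk f) = ⟨T f, LinearMap.mem_range_self T f⟩ :=
      Subtype.ext (LinearMap.quotKerEquivRange_apply_mk T f)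
    have h2 : eq1.symm ⟨T f, LinearMap.mem_range_self T f⟩ = Submodule.Quotient.mk f := by
      rw [← h1, LinearEquiv.symm_apply_apply]
    show u (eq1.symm ⟨T f, LinearMap.mem_range_self T f⟩) = S f
    rw [h2]
    exact Submodule.liftQ_apply _ S f
  have hgnorm : ∀ x : LinearMap.range T, ‖g x‖ = ‖x‖ := by
    rintro ⟨x, hx⟩
    obtain ⟨f, rfl⟩ := hx
    have e1 : (⟨T f, ⟨f, rfl⟩⟩ : LinearMap.range T) = ⟨T f, LinearMap.mem_range_self T f⟩ := rfl
    rw [e1, hgmk f, ← hTS f]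
    rfl
  let G₀ : LinearMap.range T →ₗᵢ[ℝ] Lp ℝ p μ01 := ⟨g, hgnorm⟩
  have hdT : Dense ((LinearMap.range T : Submodule ℝ B) : Set B) := by
    have h1 : LinearMap.range T = Submodule.span ℝ (Set.range φ) :=
      Finsupp.range_linearCombination ℝ
    rw [h1]
    exact Submodule.dense_iff_topologicalClosure_eq_top.mpr hdense
  let ι : (LinearMap.range T : Submodule ℝ B) →L[ℝ] B := (LinearMap.range T).subtypeL
  have hιcoe : ⇑ι = (Subtype.val : LinearMap.range T → B) := rfl
  have hιd : DenseRange ι := by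
    rw [DenseRange, hιcoe, Subtype.range_coe]
    exact hdT
  have hιu : IsUniformInducing ι := by
    rw [hιcoe]
    exact isometry_subtype_coe.isUniformInducing
  let G : B →L[ℝ] Lp ℝ p μ01 := (G₀.toContinuousLinearMap).extend ι
  have hGι : ∀ x : LinearMap.range T, G (ι x) = G₀ x := fun x =>
    ContinuousLinearMap.extend_eq _ (e := ι) hιd hιu x
  have hGnorm : ∀ x : B, ‖G x‖ = ‖x‖ := by
    have hclosed : IsClosed {x : B | ‖G x‖ = ‖x‖} :=
      isClosed_eq (continuous_norm.comp G.continuous) continuous_norm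
    have hsub : ((LinearMap.range T : Submodule ℝ B) : Set B) ⊆ {x | ‖G x‖ = ‖x‖} := by
      rintro x hx
      show ‖G x‖ = ‖x‖
      have e1 : x = ι ⟨x, hx⟩ := rfl
      rw [e1, hGι, G₀.norm_map]
      rfl
    have huniv : {x : B | ‖G x‖ = ‖x‖} = Set.univ := by
      apply Set.eq_univ_of_univ_subset
      calc Set.univ = closure ((LinearMap.range T : Submodule ℝ B) : Set B) :=
            hdT.closure_eq.symm
        _ ⊆ closure {x | ‖G x‖ = ‖x‖} := closure_mono hsub
        _ = {x | ‖G x‖ = ‖x‖} := hclosed.closure_eq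
    intro x
    exact Set.eq_univ_iff_forall.mp huniv x
  let GLI : B →ₗᵢ[ℝ] Lp ℝ p μ01 := ⟨G.toLinearMap, hGnorm⟩
  have hGLIcoe : ∀ x : B, GLI x = G x := fun _ => rfl
  have hrangeS : ∀ f : List Bool →₀ ℝ, S f ∈ Set.range GLI := by
    intro f
    refine ⟨ι ⟨T f, LinearMap.mem_range_self T f⟩, ?_⟩
    rw [hGLIcoe, hGι, ← hgmk f]
    rfl
  have hclosedrange : IsClosed (Set.range GLI) :=
    (GLI.isometry.isClosedEmbedding).isClosed_range
  have hdenseS : Dense ((Submodule.span ℝ (Set.range (ψ p)) :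
      Submodule ℝ (Lp ℝ p μ01)) : Set (Lp ℝ p μ01)) := span_psi_dense hr hp0 hpt hpr
  have hsub2 : ((Submodule.span ℝ (Set.range (ψ p)) :
      Submodule ℝ (Lp ℝ p μ01)) : Set (Lp ℝ p μ01)) ⊆ Set.range GLI := by
    have h1 : LinearMap.range S = Submodule.span ℝ (Set.range (ψ p)) :=
      Finsupp.range_linearCombination ℝ
    rw [← h1]
    rintro y ⟨f, rfl⟩
    exact hrangeS f
  have hsurj : Function.Surjective GLI := by
    rw [← Set.range_eq_univ]
    apply Set.eq_univ_of_univ_subset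
    calc Set.univ = closure ((Submodule.span ℝ (Set.range (ψ p)) :
          Submodule ℝ (Lp ℝ p μ01)) : Set (Lp ℝ p μ01)) := hdenseS.closure_eq.symm
      _ ⊆ closure (Set.range GLI) := closure_mono hsub2
      _ = Set.range GLI := hclosedrange.closure_eq
  exact ⟨LinearIsometryEquiv.ofSurjective GLI hsurj⟩
end

section
/- Suppose 1 ≤ p < ∞, p ≠ 2, and f, g ∈ L^p(Ω; 𝔽) satisfy ‖αf + βg‖_p^p = |α|^p‖f‖_p^p + |β|^p‖g‖_p^p for all scalars α, β. Then f and g are disjointly supported: f·g = 0 almost everywhere. -/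
open MeasureTheory

private lemma lamp_sq_rpow {x : ℝ} (hx : 0 ≤ x) (p : ℝ) : (x * x) ^ (p / 2) = x ^ p := by
  rw [← pow_two, ← Real.rpow_natCast_mul hx 2 (p / 2),
    show ((2 : ℕ) : ℝ) * (p / 2) = p by push_cast; ring]

private lemma lamp_strict_super {x y r : ℝ} (hx : 0 < x) (hy : 0 < y) (hr : 1 < r) :
    x ^ r + y ^ r < (x + y) ^ r := by
  have hxy : (0 : ℝ) < x + y := by linarith
  have ex : x ^ r = x * x ^ (r - 1) := by
    have := Real.rpow_add hx 1 (r - 1)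
    rw [Real.rpow_one, show (1 : ℝ) + (r - 1) = r by ring] at this
    exact this
  have ey : y ^ r = y * y ^ (r - 1) := by
    have := Real.rpow_add hy 1 (r - 1)
    rw [Real.rpow_one, show (1 : ℝ) + (r - 1) = r by ring] at this
    exact this
  have exy : (x + y) ^ r = (x + y) * (x + y) ^ (r - 1) := by
    have := Real.rpow_add hxy 1 (r - 1)
    rw [Real.rpow_one, show (1 : ℝ) + (r - 1) = r by ring] at this
    exact this
  have h1 : x ^ (r - 1) < (x + y) ^ (r - 1) :=
    Real.rpow_lt_rpow hx.le (by linarith) (by linarith)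
  have h2 : y ^ (r - 1) < (x + y) ^ (r - 1) :=
    Real.rpow_lt_rpow hy.le (by linarith) (by linarith)
  rw [ex, ey, exy]
  nlinarith

private lemma lamp_strict_sub {x y r : ℝ} (hx : 0 < x) (hy : 0 < y) (hr0 : 0 < r)
    (hr1 : r < 1) : (x + y) ^ r < x ^ r + y ^ r := by
  have hxy : (0 : ℝ) < x + y := by linarith
  have ex : x ^ r = x * x ^ (r - 1) := by
    have := Real.rpow_add hx 1 (r - 1)
    rw [Real.rpow_one, show (1 : ℝ) + (r - 1) = r by ring] at this
    exact this
  have ey : y ^ r = y * y ^ (r - 1) := by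
    have := Real.rpow_add hy 1 (r - 1)
    rw [Real.rpow_one, show (1 : ℝ) + (r - 1) = r by ring] at this
    exact this
  have exy : (x + y) ^ r = (x + y) * (x + y) ^ (r - 1) := by
    have := Real.rpow_add hxy 1 (r - 1)
    rw [Real.rpow_one, show (1 : ℝ) + (r - 1) = r by ring] at this
    exact this
  have h1 : (x + y) ^ (r - 1) < x ^ (r - 1) :=
    Real.rpow_lt_rpow_of_neg hx (by linarith) (by linarith)
  have h2 : (x + y) ^ (r - 1) < y ^ (r - 1) :=
    Real.rpow_lt_rpow_of_neg hy (by linarith) (by linarith)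
  rw [ex, ey, exy]
  nlinarith

private lemma lamp_super_le {x y r : ℝ} (hx : 0 ≤ x) (hy : 0 ≤ y) (hr : 1 ≤ r) :
    x ^ r + y ^ r ≤ (x + y) ^ r := by
  have hr0 : r ≠ 0 := by linarith
  rcases eq_or_lt_of_le hx with rfl | hx
  · simp [Real.zero_rpow hr0]
  rcases eq_or_lt_of_le hy with rfl | hy
  · simp [Real.zero_rpow hr0]
  rcases eq_or_lt_of_le hr with rfl | hr
  · simp [Real.rpow_one]
  · exact (lamp_strict_super hx hy hr).le

private lemma lamp_sub_le {x y r : ℝ} (hx : 0 ≤ x) (hy : 0 ≤ y) (hr0 : 0 < r) (hr1 : r ≤ 1) :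
    (x + y) ^ r ≤ x ^ r + y ^ r := by
  rcases eq_or_lt_of_le hx with rfl | hx
  · simp [Real.zero_rpow hr0.ne']
  rcases eq_or_lt_of_le hy with rfl | hy
  · simp [Real.zero_rpow hr0.ne']
  rcases eq_or_lt_of_le hr1 with rfl | hr1
  · simp [Real.rpow_one]
  · exact (lamp_strict_sub hx hy hr0 hr1).le

private lemma lamp_eq_case {x y r : ℝ} (hx : 0 ≤ x) (hy : 0 ≤ y) (hr0 : 0 < r) (hr1 : r ≠ 1)
    (h : (x + y) ^ r = x ^ r + y ^ r) : x * y = 0 := by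
  by_contra hxy
  have hx0 : 0 < x := lt_of_le_of_ne hx (fun h' => hxy (by rw [← h']; ring))
  have hy0 : 0 < y := lt_of_le_of_ne hy (fun h' => hxy (by rw [← h']; ring))
  rcases lt_or_gt_of_ne hr1 with h1 | h1
  · exact absurd h (ne_of_lt (lamp_strict_sub hx0 hy0 hr0 h1))
  · exact absurd h (ne_of_gt (lamp_strict_super hx0 hy0 h1))

private lemma lamp_mid_convex {u v r : ℝ} (hu : 0 ≤ u) (hv : 0 ≤ v) (hr : 1 ≤ r) :
    ((u + v) / 2) ^ r ≤ (u ^ r + v ^ r) / 2 := by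
  have h := (convexOn_rpow hr).2 (Set.mem_Ici.2 hu) (Set.mem_Ici.2 hv)
    (by norm_num : (0:ℝ) ≤ 1/2) (by norm_num : (0:ℝ) ≤ 1/2) (by norm_num)
  simp only [smul_eq_mul] at h
  rw [show (u + v) / 2 = 1/2 * u + 1/2 * v by ring]
  linarith

private lemma lamp_mid_concave {u v r : ℝ} (hu : 0 ≤ u) (hv : 0 ≤ v) (hr0 : 0 ≤ r)
    (hr1 : r ≤ 1) : (u ^ r + v ^ r) / 2 ≤ ((u + v) / 2) ^ r := by
  have h := (Real.concaveOn_rpow hr0 hr1).2 (Set.mem_Ici.2 hu) (Set.mem_Ici.2 hv)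
    (by norm_num : (0:ℝ) ≤ 1/2) (by norm_num : (0:ℝ) ≤ 1/2) (by norm_num)
  simp only [smul_eq_mul] at h
  rw [show (u + v) / 2 = 1/2 * u + 1/2 * v by ring]
  linarith

private lemma lamp_sumSq {𝕜 : Type*} [RCLike 𝕜] (a b : 𝕜) :
    (‖a + b‖ * ‖a + b‖ + ‖a - b‖ * ‖a - b‖) / 2 = ‖a‖ * ‖a‖ + ‖b‖ * ‖b‖ := by
  have := parallelogram_law_with_norm 𝕜 a b
  linarith

private lemma lamp_half_ge {𝕜 : Type*} [RCLike 𝕜] {p : ℝ} (hp : 2 ≤ p) (a b : 𝕜) :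
    ‖a‖ ^ p + ‖b‖ ^ p ≤ (‖a + b‖ ^ p + ‖a - b‖ ^ p) / 2 := by
  have hr : 1 ≤ p / 2 := by linarith
  calc ‖a‖ ^ p + ‖b‖ ^ p
      = (‖a‖ * ‖a‖) ^ (p/2) + (‖b‖ * ‖b‖) ^ (p/2) := by
        rw [lamp_sq_rpow (norm_nonneg a), lamp_sq_rpow (norm_nonneg b)]
    _ ≤ (‖a‖ * ‖a‖ + ‖b‖ * ‖b‖) ^ (p/2) :=
        lamp_super_le (mul_self_nonneg _) (mul_self_nonneg _) hr
    _ = ((‖a + b‖ * ‖a + b‖ + ‖a - b‖ * ‖a - b‖) / 2) ^ (p/2) := by rw [lamp_sumSq]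
    _ ≤ ((‖a + b‖ * ‖a + b‖) ^ (p/2) + (‖a - b‖ * ‖a - b‖) ^ (p/2)) / 2 :=
        lamp_mid_convex (mul_self_nonneg _) (mul_self_nonneg _) hr
    _ = (‖a + b‖ ^ p + ‖a - b‖ ^ p) / 2 := by
        rw [lamp_sq_rpow (norm_nonneg _), lamp_sq_rpow (norm_nonneg _)]

private lemma lamp_half_le {𝕜 : Type*} [RCLike 𝕜] {p : ℝ} (hp0 : 0 < p) (hp : p ≤ 2) (a b : 𝕜) :
    (‖a + b‖ ^ p + ‖a - b‖ ^ p) / 2 ≤ ‖a‖ ^ p + ‖b‖ ^ p := by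
  have hr0 : 0 < p / 2 := by linarith
  have hr1 : p / 2 ≤ 1 := by linarith
  calc (‖a + b‖ ^ p + ‖a - b‖ ^ p) / 2
      = ((‖a + b‖ * ‖a + b‖) ^ (p/2) + (‖a - b‖ * ‖a - b‖) ^ (p/2)) / 2 := by
        rw [lamp_sq_rpow (norm_nonneg _), lamp_sq_rpow (norm_nonneg _)]
    _ ≤ ((‖a + b‖ * ‖a + b‖ + ‖a - b‖ * ‖a - b‖) / 2) ^ (p/2) :=
        lamp_mid_concave (mul_self_nonneg _) (mul_self_nonneg _) hr0.le hr1
    _ = (‖a‖ * ‖a‖ + ‖b‖ * ‖b‖) ^ (p/2) := by rw [lamp_sumSq]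
    _ ≤ (‖a‖ * ‖a‖) ^ (p/2) + (‖b‖ * ‖b‖) ^ (p/2) :=
        lamp_sub_le (mul_self_nonneg _) (mul_self_nonneg _) hr0 hr1
    _ = ‖a‖ ^ p + ‖b‖ ^ p := by
        rw [lamp_sq_rpow (norm_nonneg a), lamp_sq_rpow (norm_nonneg b)]

private lemma lamp_pointwise {𝕜 : Type*} [RCLike 𝕜] {p : ℝ} (hp0 : 0 < p) (hp2 : p ≠ 2)
    (a b : 𝕜) (h : (‖a + b‖ ^ p + ‖a - b‖ ^ p) / 2 = ‖a‖ ^ p + ‖b‖ ^ p) : a * b = 0 := by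
  have hr0 : 0 < p / 2 := by linarith
  have hr1 : p / 2 ≠ 1 := fun h' => hp2 (by linarith)
  have key : (‖a‖ * ‖a‖ + ‖b‖ * ‖b‖) ^ (p/2)
      = (‖a‖ * ‖a‖) ^ (p/2) + (‖b‖ * ‖b‖) ^ (p/2) := by
    rw [lamp_sq_rpow (norm_nonneg a), lamp_sq_rpow (norm_nonneg b)]
    rcases lt_or_gt_of_ne hp2 with h2 | h2
    · have u1 : (‖a‖ * ‖a‖ + ‖b‖ * ‖b‖) ^ (p/2) ≤ ‖a‖ ^ p + ‖b‖ ^ p := by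
        rw [← lamp_sq_rpow (norm_nonneg a) p, ← lamp_sq_rpow (norm_nonneg b) p]
        exact lamp_sub_le (mul_self_nonneg _) (mul_self_nonneg _) hr0 (by linarith)
      have u2 : ‖a‖ ^ p + ‖b‖ ^ p ≤ (‖a‖ * ‖a‖ + ‖b‖ * ‖b‖) ^ (p/2) := by
        rw [← h, ← lamp_sumSq a b]
        calc ((‖a + b‖ ^ p + ‖a - b‖ ^ p)) / 2
            = ((‖a + b‖ * ‖a + b‖) ^ (p/2) + (‖a - b‖ * ‖a - b‖) ^ (p/2)) / 2 := by
              rw [lamp_sq_rpow (norm_nonneg _), lamp_sq_rpow (norm_nonneg _)]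
          _ ≤ ((‖a + b‖ * ‖a + b‖ + ‖a - b‖ * ‖a - b‖) / 2) ^ (p/2) :=
              lamp_mid_concave (mul_self_nonneg _) (mul_self_nonneg _) hr0.le (by linarith)
      linarith
    · have u1 : ‖a‖ ^ p + ‖b‖ ^ p ≤ (‖a‖ * ‖a‖ + ‖b‖ * ‖b‖) ^ (p/2) := by
        rw [← lamp_sq_rpow (norm_nonneg a) p, ← lamp_sq_rpow (norm_nonneg b) p]
        exact lamp_super_le (mul_self_nonneg _) (mul_self_nonneg _) (by linarith)
      have u2 : (‖a‖ * ‖a‖ + ‖b‖ * ‖b‖) ^ (p/2) ≤ ‖a‖ ^ p + ‖b‖ ^ p := by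
        rw [← h, ← lamp_sumSq a b]
        calc ((‖a + b‖ * ‖a + b‖ + ‖a - b‖ * ‖a - b‖) / 2) ^ (p/2)
            ≤ ((‖a + b‖ * ‖a + b‖) ^ (p/2) + (‖a - b‖ * ‖a - b‖) ^ (p/2)) / 2 :=
              lamp_mid_convex (mul_self_nonneg _) (mul_self_nonneg _) (by linarith)
          _ = ((‖a + b‖ ^ p + ‖a - b‖ ^ p)) / 2 := by
              rw [lamp_sq_rpow (norm_nonneg _), lamp_sq_rpow (norm_nonneg _)]
      linarith
  have h0 := lamp_eq_case (mul_self_nonneg ‖a‖) (mul_self_nonneg ‖b‖) hr0 hr1 key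
  have h1 : (‖a‖ * ‖b‖) * (‖a‖ * ‖b‖) = 0 := by linear_combination h0
  have h2 : ‖a * b‖ = 0 := by rw [norm_mul]; exact mul_self_eq_zero.1 h1
  exact norm_eq_zero.1 h2

/-- Lamperti: for `p ≠ 2`, `L^p`-formally disjointly supported
functions in `L^p(Ω; 𝕜)` are disjointly supported. -/
theorem stmt19 {X : Type*} [MeasurableSpace X] (μ : Measure X)
    {𝕜 : Type*} [RCLike 𝕜] (p : ℝ) (hp : 1 ≤ p) (hp2 : p ≠ 2)
    (f g : X → 𝕜)
    (hf : MemLp f (ENNReal.ofReal p) μ) (hg : MemLp g (ENNReal.ofReal p) μ)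
    (hformal : ∀ α β : 𝕜,
      (eLpNorm (α • f + β • g) (ENNReal.ofReal p) μ).toReal ^ p
        = ‖α‖ ^ p * (eLpNorm f (ENNReal.ofReal p) μ).toReal ^ p
          + ‖β‖ ^ p * (eLpNorm g (ENNReal.ofReal p) μ).toReal ^ p) :
    ∀ᵐ t ∂μ, f t * g t = 0 := by
  have hp0 : 0 < p := by linarith
  set q := ENNReal.ofReal p with hq
  have hq0 : q ≠ 0 := (ENNReal.ofReal_pos.2 hp0).ne'
  have hqt : q ≠ ⊤ := ENNReal.ofReal_ne_top
  have hqr : q.toReal = p := ENNReal.toReal_ofReal hp0.le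
  -- key identity
  have key : ∀ h : X → 𝕜, MemLp h q μ →
      (eLpNorm h q μ).toReal ^ p = ∫ x, ‖h x‖ ^ p ∂μ := by
    intro h hh
    have hI : 0 ≤ ∫ x, ‖h x‖ ^ p ∂μ :=
      integral_nonneg fun x => Real.rpow_nonneg (norm_nonneg _) _
    rw [hh.eLpNorm_eq_integral_rpow_norm hq0 hqt, hqr,
      ENNReal.toReal_ofReal (Real.rpow_nonneg hI _), ← Real.rpow_mul hI,
      inv_mul_cancel₀ hp0.ne', Real.rpow_one]
  have hmemadd : MemLp (f + g) q μ := hf.add hg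
  have hmemsub : MemLp (f - g) q μ := hf.sub hg
  have Nadd : ∫ x, ‖f x + g x‖ ^ p ∂μ = (∫ x, ‖f x‖ ^ p ∂μ) + ∫ x, ‖g x‖ ^ p ∂μ := by
    have h11 := hformal 1 1
    rw [one_smul, one_smul, key f hf, key g hg, key (f + g) hmemadd] at h11
    simpa [Real.one_rpow] using h11
  have Nsub : ∫ x, ‖f x - g x‖ ^ p ∂μ = (∫ x, ‖f x‖ ^ p ∂μ) + ∫ x, ‖g x‖ ^ p ∂μ := by
    have h11 := hformal 1 (-1)
    have e : (1 : 𝕜) • f + (-1 : 𝕜) • g = f - g := by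
      funext x; simp [sub_eq_add_neg]
    rw [e, key f hf, key g hg, key (f - g) hmemsub] at h11
    simpa [Real.one_rpow] using h11
  have intF1 : Integrable (fun x => ‖f x‖ ^ p) μ := by
    have := hf.integrable_norm_rpow hq0 hqt; rwa [hqr] at this
  have intF2 : Integrable (fun x => ‖g x‖ ^ p) μ := by
    have := hg.integrable_norm_rpow hq0 hqt; rwa [hqr] at this
  have intF3 : Integrable (fun x => ‖f x + g x‖ ^ p) μ := by
    have := hmemadd.integrable_norm_rpow hq0 hqt; rw [hqr] at this
    simpa using this
  have intF4 : Integrable (fun x => ‖f x - g x‖ ^ p) μ := by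
    have := hmemsub.integrable_norm_rpow hq0 hqt; rw [hqr] at this
    simpa using this
  have intFsum : Integrable (fun x => ‖f x‖ ^ p + ‖g x‖ ^ p) μ := intF1.add intF2
  have intH : Integrable (fun x => (‖f x + g x‖ ^ p + ‖f x - g x‖ ^ p) / 2) μ :=
    (intF3.add intF4).div_const 2
  have iH : ∫ x, (‖f x + g x‖ ^ p + ‖f x - g x‖ ^ p) / 2 ∂μ
      = ∫ x, (‖f x‖ ^ p + ‖g x‖ ^ p) ∂μ := by
    rw [integral_div, integral_add intF3 intF4, integral_add intF1 intF2, Nadd, Nsub]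
    ring
  have main : ∀ᵐ t ∂μ,
      (‖f t + g t‖ ^ p + ‖f t - g t‖ ^ p) / 2 = ‖f t‖ ^ p + ‖g t‖ ^ p := by
    rcases lt_or_gt_of_ne hp2 with hplt | hpgt
    · -- p < 2
      have hzero : ∫ x, ((‖f x‖ ^ p + ‖g x‖ ^ p)
          - (‖f x + g x‖ ^ p + ‖f x - g x‖ ^ p) / 2) ∂μ = 0 := by
        rw [integral_sub intFsum intH, iH, sub_self]
      have hnon : 0 ≤ fun x => ((‖f x‖ ^ p + ‖g x‖ ^ p)
          - (‖f x + g x‖ ^ p + ‖f x - g x‖ ^ p) / 2) := by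
        intro x
        have := lamp_half_le hp0 hplt.le (f x) (g x)
        simp only [Pi.zero_apply]
        linarith
      have := (integral_eq_zero_iff_of_nonneg hnon (intFsum.sub intH)).1 hzero
      filter_upwards [this] with t ht
      simp only [Pi.zero_apply] at ht
      linarith
    · -- p > 2
      have hzero : ∫ x, ((‖f x + g x‖ ^ p + ‖f x - g x‖ ^ p) / 2
          - (‖f x‖ ^ p + ‖g x‖ ^ p)) ∂μ = 0 := by
        rw [integral_sub intH intFsum, iH, sub_self]
      have hnon : 0 ≤ fun x => ((‖f x + g x‖ ^ p + ‖f x - g x‖ ^ p) / 2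
          - (‖f x‖ ^ p + ‖g x‖ ^ p)) := by
        intro x
        have := lamp_half_ge hpgt.le (f x) (g x)
        simp only [Pi.zero_apply]
        linarith
      have := (integral_eq_zero_iff_of_nonneg hnon (intH.sub intFsum)).1 hzero
      filter_upwards [this] with t ht
      simp only [Pi.zero_apply] at ht
      linarith
  filter_upwards [main] with t ht
  exact lamp_pointwise hp0 hp2 (f t) (g t) ht
end
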